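/- arXiv:1911.02164 — 4 statements merged into one kernel-verified Lean document; each statement's English description precedes it below -/
import Mathlib

section
/- Let α ∈ BV_loc((a,b),ℂ) with supp(dα) = (a,b), and let r ∈ ℂ. If f is an r-balanced function on (a,b) satisfying f = 0 dα-almost everywhere on (a,b) (with respect to the total variation measure of dα), then f is identically zero on (a,b). -/
open Set Filter Function MeasureTheory Topology

noncomputable section

/-- The open interval `(a,b) ⊆ ℝ` determined by extended-real endpoints `a`, `b`. -/
def EI (a b : EReal) : Set ℝ := {x : ℝ | a < (x : EReal) ∧ (x : EReal) < b}

/-- The jump `Δ_{df}(x) = f⁺(x) - f⁻(x)` of a real-valued function. -/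
def jump (f : ℝ → ℝ) (x : ℝ) : ℝ := rightLim f x - leftLim f x

/-- The jump `Δ_{df}(x) = f⁺(x) - f⁻(x)` of a complex-valued function. -/
def jumpC (f : ℝ → ℂ) (x : ℝ) : ℂ := rightLim f x - leftLim f x

/-- `θ_z(x) = 1 - z² Δ_{dα}(x) Δ_{dβ}(x)`. -/
def theta (α β : ℝ → ℝ) (z x : ℝ) : ℝ := 1 - z ^ 2 * jump α x * jump β x

/-- `ω(x) = 1 - Δ_{dα}(x) Δ_{dβ}(x) / 4`. -/
def omegaFn (α β : ℝ → ℝ) (x : ℝ) : ℝ := 1 - jump α x * jump β x / 4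

/-- A real-valued function is `r`-balanced on `I`: it is of locally bounded variation and
`f(x) = r f⁻(x) + (1-r) f⁺(x)` for all `x ∈ I`. -/
def RBalanced (r : ℝ) (I : Set ℝ) (f : ℝ → ℝ) : Prop :=
  LocallyBoundedVariationOn f I ∧
    ∀ x ∈ I, f x = r * leftLim f x + (1 - r) * rightLim f x

/-- A complex-valued function is `r`-balanced on `I`. -/
def RBalancedC (r : ℂ) (I : Set ℝ) (f : ℝ → ℂ) : Prop :=
  LocallyBoundedVariationOn f I ∧
    ∀ x ∈ I, f x = r * leftLim f x + (1 - r) * rightLim f x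

/-- `ν` coincides on `[c,d]` with the Lebesgue–Stieltjes measure `df` generated by `f`,
determined by `df((x,y]) = f⁺(y) - f⁺(x)`. -/
def SMRepresents (ν : SignedMeasure ℝ) (f : ℝ → ℝ) (c d : ℝ) : Prop :=
  ∀ x ∈ Icc c d, ∀ y ∈ Icc c d, x ≤ y → ν (Ioc x y) = rightLim f y - rightLim f x

/-- The integral of `h` against the signed measure `ν` over the set `E`. -/
def sInt (ν : SignedMeasure ℝ) (h : ℝ → ℝ) (E : Set ℝ) : ℝ :=
  (∫ x in E, h x ∂ν.toJordanDecomposition.posPart) -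
    (∫ x in E, h x ∂ν.toJordanDecomposition.negPart)

/-- The equality of (locally finite, real Borel) measures `dg = ∑ j, (h j) d(β j)` on the
interval `I`, expressed via localizations to compact subintervals of `I`. -/
def MeasureEqOn (I : Set ℝ) {ι : Type} [Fintype ι] (g : ℝ → ℝ) (h β : ι → ℝ → ℝ) : Prop :=
  ∀ c ∈ I, ∀ d ∈ I, c < d →
    ∃ (νg : SignedMeasure ℝ) (ν : ι → SignedMeasure ℝ),
      SMRepresents νg g c d ∧ (∀ j, SMRepresents (ν j) (β j) c d) ∧
      ∀ E : Set ℝ, E ⊆ Ioc c d → MeasurableSet E → νg E = ∑ j, sInt (ν j) (h j) E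

/-- The equality of complex measures `dg = ∑ j, (h j) d(β j)` on `I`, encoded via real and
imaginary parts. -/
def MeasureEqOnC (I : Set ℝ) {ι : Type} [Fintype ι] (g : ℝ → ℂ) (h β : ι → ℝ → ℂ) : Prop :=
  MeasureEqOn I (fun x => (g x).re)
    (Sum.elim (fun j x => (h j x).re) (fun j x => -(h j x).im))
    (Sum.elim (fun j x => (β j x).re) (fun j x => (β j x).im)) ∧
  MeasureEqOn I (fun x => (g x).im)
    (Sum.elim (fun j x => (h j x).im) (fun j x => (h j x).re))
    (Sum.elim (fun j x => (β j x).re) (fun j x => (β j x).im))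

/-- The support of `dα` is all of `I`: no open subinterval of `I` is `dα`-null, i.e. on no
open subinterval of `I` do all one-sided limits of `α` coincide with a single constant. -/
def SuppFull (I : Set ℝ) (α : ℝ → ℂ) : Prop :=
  ∀ x ∈ I, ∀ ε > (0 : ℝ), Icc (x - ε) (x + ε) ⊆ I →
    ¬ (∀ p ∈ Ioo (x - ε) (x + ε), ∀ q ∈ Ioo (x - ε) (x + ε),
        rightLim α p = rightLim α q ∧ leftLim α p = rightLim α q)

/-- `u`, together with the representative `w` of `du/dα`, is an `r`-balanced solution of the
homogeneous equation `-d(du/dα) + u dβ = 0` on `I`: `u` and `w` are `r`-balanced,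
`du = w dα` (so `du ≪ dα` with `du/dα = w`), and `dw = u dβ`. -/
def IsHomSol (I : Set ℝ) (r : ℝ) (α β u w : ℝ → ℝ) : Prop :=
  RBalanced r I u ∧ RBalanced r I w ∧
  MeasureEqOn I u (fun _ : Fin 1 => w) (fun _ => α) ∧
  MeasureEqOn I w (fun _ : Fin 1 => u) (fun _ => β)

/-- `u`, together with the representative `w` of `du/dα`, is an `r`-balanced solution of
`-d(du/dα) + u dβ = dη` on `I` (complex-valued coefficients): `dw = u dβ - dη`. -/
def IsSolC (I : Set ℝ) (r : ℂ) (α β η u w : ℝ → ℂ) : Prop :=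
  RBalancedC r I u ∧ RBalancedC r I w ∧
  MeasureEqOnC I u (fun _ : Fin 1 => w) (fun _ => α) ∧
  MeasureEqOnC I w ![u, fun _ => (-1 : ℂ)] ![β, η]

/-- `y` solves the linear system `dy = dφ · y + dψ` on `I`, componentwise:
`d(y i) = ∑ j, (y j) d(φ i j) + dψ i`. -/
def IsSysSolC (I : Set ℝ) (n : ℕ) (φ : ℝ → Matrix (Fin n) (Fin n) ℂ)
    (ψ : ℝ → Fin n → ℂ) (y : ℝ → Fin n → ℂ) : Prop :=
  ∀ i : Fin n,
    MeasureEqOnC I (fun x => y x i)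
      (Sum.elim (fun j : Fin n => fun x => y x j) (fun _ : Unit => fun _ => (1 : ℂ)))
      (Sum.elim (fun j : Fin n => fun x => φ x i j) (fun _ : Unit => fun x => ψ x i))

/-- `Z_I(f) = {x ∈ I : f⁻(x) f⁺(x) ≤ 0}`, the set of sign-changing points of `f` in `I`. -/
def ZSet (f : ℝ → ℝ) (I : Set ℝ) : Set ℝ := {x ∈ I | leftLim f x * rightLim f x ≤ 0}

/-- `u` changes sign at `s ∈ I`. -/
def ChangesSignAt (I : Set ℝ) (u : ℝ → ℝ) (s : ℝ) : Prop :=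
  ∃ δ > (0 : ℝ), Ioo (s - δ) (s + δ) ⊆ I ∧
    (((∀ x ∈ Ioo (s - δ) s, leftLim u x < 0) ∧ ∀ x ∈ Ioo s (s + δ), 0 < rightLim u x) ∨
     ((∀ x ∈ Ioo (s - δ) s, 0 < leftLim u x) ∧ ∀ x ∈ Ioo s (s + δ), rightLim u x < 0))

/-- `u` changes sign in `J` (a subinterval of `I`). -/
def ChangesSignIn (I : Set ℝ) (u : ℝ → ℝ) (J : Set ℝ) : Prop :=
  ∃ s ∈ J, ChangesSignAt I u s

/-- `u` and `v` are linearly dependent on `I`. -/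
def LinDepOn (I : Set ℝ) (u v : ℝ → ℝ) : Prop :=
  ∃ c₁ c₂ : ℝ, ¬(c₁ = 0 ∧ c₂ = 0) ∧ ∀ x ∈ I, c₁ * u x + c₂ * v x = 0

/-- The Lebesgue–Stieltjes measure `dg` is nonnegative on (Borel subsets of) `S`, expressed by
nonnegativity on all subintervals of `S` of each of the four kinds. -/
def PosMeasureOn (g : ℝ → ℝ) (S : Set ℝ) : Prop :=
  (∀ x y : ℝ, x ≤ y → Icc x y ⊆ S → 0 ≤ rightLim g y - leftLim g x) ∧
  (∀ x y : ℝ, x ≤ y → Ico x y ⊆ S → 0 ≤ leftLim g y - leftLim g x) ∧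
  (∀ x y : ℝ, x ≤ y → Ioc x y ⊆ S → 0 ≤ rightLim g y - rightLim g x) ∧
  (∀ x y : ℝ, x < y → Ioo x y ⊆ S → 0 ≤ leftLim g y - rightLim g x)


section Aux

open Function

private lemma real_bv_tendsto_right {g : ℝ → ℝ} {S : Set ℝ} (hg : LocallyBoundedVariationOn g S)
    {x y : ℝ} (hx : x ∈ S) (hxy : x < y) (hsub : Ioo x y ⊆ S) :
    ∃ L, Tendsto g (𝓝[>] x) (𝓝 L) := by
  obtain ⟨p, q, hp, hq, hpq⟩ := hg.exists_monotoneOn_sub_monotoneOn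
  have hne : (Ioo x y).Nonempty := nonempty_Ioo.2 hxy
  have bp : BddBelow (p '' Ioo x y) := ⟨p x, by
    rintro _ ⟨t, ht, rfl⟩
    exact hp hx (hsub ht) ht.1.le⟩
  have bq : BddBelow (q '' Ioo x y) := ⟨q x, by
    rintro _ ⟨t, ht, rfl⟩
    exact hq hx (hsub ht) ht.1.le⟩
  have h := ((hp.mono hsub).tendsto_nhdsWithin_Ioo_right hne bp).sub
    ((hq.mono hsub).tendsto_nhdsWithin_Ioo_right hne bq)
  exact ⟨_, by rw [hpq]; exact h⟩

private lemma real_bv_tendsto_left {g : ℝ → ℝ} {S : Set ℝ} (hg : LocallyBoundedVariationOn g S)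
    {w x : ℝ} (hx : x ∈ S) (hwx : w < x) (hsub : Ioo w x ⊆ S) :
    ∃ L, Tendsto g (𝓝[<] x) (𝓝 L) := by
  obtain ⟨p, q, hp, hq, hpq⟩ := hg.exists_monotoneOn_sub_monotoneOn
  have hne : (Ioo w x).Nonempty := nonempty_Ioo.2 hwx
  have bp : BddAbove (p '' Ioo w x) := ⟨p x, by
    rintro _ ⟨t, ht, rfl⟩
    exact hp (hsub ht) hx ht.2.le⟩
  have bq : BddAbove (q '' Ioo w x) := ⟨q x, by
    rintro _ ⟨t, ht, rfl⟩
    exact hq (hsub ht) hx ht.2.le⟩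
  have h := (MonotoneOn.tendsto_nhdsWithin_Ioo_left hne (hp.mono hsub) bp).sub
    (MonotoneOn.tendsto_nhdsWithin_Ioo_left hne (hq.mono hsub) bq)
  exact ⟨_, by rw [hpq]; exact h⟩

private lemma cx_bv_tendsto_right {α : ℝ → ℂ} {S : Set ℝ} (hα : LocallyBoundedVariationOn α S)
    {x y : ℝ} (hx : x ∈ S) (hxy : x < y) (hsub : Ioo x y ⊆ S) :
    Tendsto α (𝓝[>] x) (𝓝 (rightLim α x)) := by
  have hre : LocallyBoundedVariationOn (fun t => (α t).re) S :=
    Complex.reCLM.lipschitz.comp_locallyBoundedVariationOn hα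
  have him : LocallyBoundedVariationOn (fun t => (α t).im) S :=
    Complex.imCLM.lipschitz.comp_locallyBoundedVariationOn hα
  obtain ⟨L1, h1⟩ := real_bv_tendsto_right hre hx hxy hsub
  obtain ⟨L2, h2⟩ := real_bv_tendsto_right him hx hxy hsub
  have hT : Tendsto α (𝓝[>] x) (𝓝 ((L1 : ℂ) + (L2 : ℂ) * Complex.I)) := by
    have h := ((Complex.continuous_ofReal.tendsto L1).comp h1).add
      ((((Complex.continuous_ofReal.tendsto L2).comp h2)).mul_const Complex.I)
    exact h.congr (fun t => Complex.re_add_im (α t))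
  have hE : rightLim α x = (L1 : ℂ) + (L2 : ℂ) * Complex.I :=
    rightLim_eq_of_tendsto hT
  rw [hE]; exact hT

private lemma cx_bv_tendsto_left {α : ℝ → ℂ} {S : Set ℝ} (hα : LocallyBoundedVariationOn α S)
    {w x : ℝ} (hx : x ∈ S) (hwx : w < x) (hsub : Ioo w x ⊆ S) :
    Tendsto α (𝓝[<] x) (𝓝 (leftLim α x)) := by
  have hre : LocallyBoundedVariationOn (fun t => (α t).re) S :=
    Complex.reCLM.lipschitz.comp_locallyBoundedVariationOn hα
  have him : LocallyBoundedVariationOn (fun t => (α t).im) S :=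
    Complex.imCLM.lipschitz.comp_locallyBoundedVariationOn hα
  obtain ⟨L1, h1⟩ := real_bv_tendsto_left hre hx hwx hsub
  obtain ⟨L2, h2⟩ := real_bv_tendsto_left him hx hwx hsub
  have hT : Tendsto α (𝓝[<] x) (𝓝 ((L1 : ℂ) + (L2 : ℂ) * Complex.I)) := by
    have h := ((Complex.continuous_ofReal.tendsto L1).comp h1).add
      ((((Complex.continuous_ofReal.tendsto L2).comp h2)).mul_const Complex.I)
    exact h.congr (fun t => Complex.re_add_im (α t))
  have hE : leftLim α x = (L1 : ℂ) + (L2 : ℂ) * Complex.I :=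
    leftLim_eq_of_tendsto hT
  rw [hE]; exact hT

/-- If `α` tends to `L` from the left at `p` and has right limit `K` at every point of
`(c, p)`, then `L = K`. -/
private lemma left_eq_of_right_const {α : ℝ → ℂ} {c p : ℝ} {L K : ℂ} (hcp : c < p)
    (hL : Tendsto α (𝓝[<] p) (𝓝 L))
    (hK : ∀ x ∈ Ioo c p, Tendsto α (𝓝[>] x) (𝓝 K)) : L = K := by
  by_contra hne
  have hd : 0 < dist L K := dist_pos.2 hne
  set ε := dist L K / 3 with hε
  have hε0 : 0 < ε := by positivity
  have h1 : {t : ℝ | dist (α t) L < ε} ∈ 𝓝[<] p := hL (Metric.ball_mem_nhds _ hε0)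
  obtain ⟨y, hy, hysub⟩ := mem_nhdsLT_iff_exists_Ioo_subset.1 h1
  set x := max y ((c + p) / 2) with hxdef
  have hxc : c < x := lt_of_lt_of_le (by linarith) (le_max_right _ _)
  have hxp : x < p := max_lt hy (by linarith)
  have h2 : {t : ℝ | dist (α t) K < ε} ∈ 𝓝[>] x :=
    hK x ⟨hxc, hxp⟩ (Metric.ball_mem_nhds _ hε0)
  have h3 : Ioo x p ∈ 𝓝[>] x := Ioo_mem_nhdsGT hxp
  obtain ⟨t, htK, htIoo⟩ := Filter.nonempty_of_mem (inter_mem h2 h3)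
  have htL : dist (α t) L < ε := hysub ⟨lt_of_le_of_lt (le_max_left y _) htIoo.1, htIoo.2⟩
  have htK' : dist (α t) K < ε := htK
  have htri : dist L K ≤ dist (α t) L + dist (α t) K := by
    rw [dist_comm (α t) L]; exact dist_triangle L (α t) K
  rw [hε] at htL htK'
  linarith

private lemma key_contra (a b : EReal) (α f : ℝ → ℂ)
    (hα : LocallyBoundedVariationOn α (EI a b))
    (hsupp : SuppFull (EI a b) α)
    (hae : ∀ c ∈ EI a b, ∀ d ∈ EI a b, c < d →
      ∃ νre νim : SignedMeasure ℝ,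
        SMRepresents νre (fun x => (α x).re) c d ∧
        SMRepresents νim (fun x => (α x).im) c d ∧
        ∀ᵐ x ∂((νre.totalVariation + νim.totalVariation).restrict (Ioc c d)), f x = 0)
    (l u : ℝ) (hlu : l < u) (hJI : Ioo l u ⊆ EI a b)
    (hfne : ∀ t ∈ Ioo l u, f t ≠ 0) : False := by
  set x₁ := (l + u) / 2 with hx₁
  set ε := (u - l) / 8 with hεdef
  have hε : 0 < ε := by rw [hεdef]; linarith
  set c := x₁ - ε with hcdef
  set d := x₁ + ε with hddef
  have hlc : l < c := by rw [hcdef, hx₁, hεdef]; linarith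
  have hcd : c < d := by rw [hcdef, hddef]; linarith
  have hdu : d < u := by rw [hddef, hx₁, hεdef]; linarith
  have hIoosub : Ioo c d ⊆ Ioo l u := fun t ht => ⟨hlc.trans ht.1, ht.2.trans hdu⟩
  have hIccsub : Icc c d ⊆ Ioo l u := fun t ht => ⟨hlc.trans_le ht.1, ht.2.trans_lt hdu⟩
  have hcI : c ∈ EI a b := hJI (hIccsub ⟨le_refl c, hcd.le⟩)
  have hdI : d ∈ EI a b := hJI (hIccsub ⟨hcd.le, le_refl d⟩)
  have hx₁I : x₁ ∈ EI a b := hJI ⟨by rw [hx₁]; linarith, by rw [hx₁]; linarith⟩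
  obtain ⟨νre, νim, hre, him, haem⟩ := hae c hcI d hdI hcd
  -- the total variation of `Ioo c d` vanishes
  have hnull : νre.totalVariation (Ioo c d) = 0 ∧ νim.totalVariation (Ioo c d) = 0 := by
    have h0 := ae_iff.1 haem
    have h1 : ((νre.totalVariation + νim.totalVariation).restrict (Ioc c d)) (Ioo c d) = 0 :=
      measure_mono_null (fun t ht => hfne t (hIoosub ht)) h0
    rw [Measure.restrict_apply measurableSet_Ioo,
      inter_eq_self_of_subset_left Ioo_subset_Ioc_self, Measure.add_apply,
      add_eq_zero] at h1
    exact h1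
  have hz : ∀ (ν : SignedMeasure ℝ), ν.totalVariation (Ioo c d) = 0 →
      ∀ p ∈ Ioo c d, ∀ q ∈ Ioo c d, p ≤ q → ν (Ioc p q) = 0 := by
    intro ν hν p hp q hq hpq
    refine ν.null_of_totalVariation_zero (measure_mono_null ?_ hν)
    exact fun t ht => ⟨hp.1.trans ht.1, ht.2.trans_lt hq.2⟩
  -- right limits of α exist and are constant on Ioo c d
  have hrt : ∀ p ∈ Ioo c d, Tendsto α (𝓝[>] p) (𝓝 (rightLim α p)) := by
    intro p hp
    have hpI : p ∈ Ioo l u := hIoosub hp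
    exact cx_bv_tendsto_right hα (hJI hpI) hpI.2
      (fun t ht => hJI ⟨hpI.1.trans ht.1, ht.2⟩)
  have hlt : ∀ p ∈ Ioo c d, Tendsto α (𝓝[<] p) (𝓝 (leftLim α p)) := by
    intro p hp
    have hpI : p ∈ Ioo l u := hIoosub hp
    exact cx_bv_tendsto_left hα (hJI hpI) hpI.1
      (fun t ht => hJI ⟨ht.1, ht.2.trans hpI.2⟩)
  have hRre : ∀ p ∈ Ioo c d, rightLim (fun t => (α t).re) p = (rightLim α p).re := by
    intro p hp
    exact rightLim_eq_of_tendsto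
      ((Complex.continuous_re.tendsto _).comp (hrt p hp))
  have hRim : ∀ p ∈ Ioo c d, rightLim (fun t => (α t).im) p = (rightLim α p).im := by
    intro p hp
    exact rightLim_eq_of_tendsto
      ((Complex.continuous_im.tendsto _).comp (hrt p hp))
  have hR : ∀ p ∈ Ioo c d, ∀ q ∈ Ioo c d, rightLim α p = rightLim α q := by
    have hR' : ∀ p ∈ Ioo c d, ∀ q ∈ Ioo c d, p ≤ q → rightLim α p = rightLim α q := by
      intro p hp q hq hpq
      have h0re : νre (Ioc p q) = 0 := hz νre hnull.1 p hp q hq hpq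
      have h0im : νim (Ioc p q) = 0 := hz νim hnull.2 p hp q hq hpq
      have e1 := hre p (Ioo_subset_Icc_self hp) q (Ioo_subset_Icc_self hq) hpq
      have e2 := him p (Ioo_subset_Icc_self hp) q (Ioo_subset_Icc_self hq) hpq
      rw [h0re] at e1
      rw [h0im] at e2
      refine Complex.ext ?_ ?_
      · rw [← hRre p hp, ← hRre q hq]; linarith
      · rw [← hRim p hp, ← hRim q hq]; linarith
    intro p hp q hq
    rcases le_total p q with h' | h'
    · exact hR' p hp q hq h'
    · exact (hR' q hq p hp h').symm
  have hLft : ∀ p ∈ Ioo c d, leftLim α p = rightLim α p := by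
    intro p hp
    refine left_eq_of_right_const hp.1 (hlt p hp) ?_
    intro x hx
    have hxcd : x ∈ Ioo c d := ⟨hx.1, hx.2.trans hp.2⟩
    have := hrt x hxcd
    rwa [hR x hxcd p hp] at this
  exact hsupp x₁ hx₁I ε hε (fun t ht => hJI (hIccsub ht))
    (fun p hp q hq => ⟨hR p hp q hq, (hLft p hp).trans (hR p hp q hq)⟩)

end Aux

/-- Theorem 3.2: if `supp(dα) = (a,b)` and the `r`-balanced function `f`
vanishes `dα`-almost everywhere (w.r.t. the total variation measure of `dα`), then `f` vanishes
identically on `(a,b)`. -/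
theorem statement1 (a b : EReal) (hab : a < b) (r : ℂ) (α f : ℝ → ℂ)
    (hα : LocallyBoundedVariationOn α (EI a b))
    (hsupp : SuppFull (EI a b) α)
    (hf : RBalancedC r (EI a b) f)
    (hae : ∀ c ∈ EI a b, ∀ d ∈ EI a b, c < d →
      ∃ νre νim : SignedMeasure ℝ,
        SMRepresents νre (fun x => (α x).re) c d ∧
        SMRepresents νim (fun x => (α x).im) c d ∧
        ∀ᵐ x ∂((νre.totalVariation + νim.totalVariation).restrict (Ioc c d)), f x = 0) :
    ∀ x ∈ EI a b, f x = 0 := by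
  intro x₀ hx₀
  by_contra hfx
  have hIopen : IsOpen (EI a b) := by
    have h : EI a b = Real.toEReal ⁻¹' (Ioo a b) := rfl
    rw [h]; exact isOpen_Ioo.preimage continuous_coe_real_ereal
  obtain ⟨ε₀, hε₀, hball⟩ := Metric.isOpen_iff.1 hIopen x₀ hx₀
  rw [Real.ball_eq_Ioo] at hball
  have hfrt : Tendsto f (𝓝[>] x₀) (𝓝 (rightLim f x₀)) :=
    cx_bv_tendsto_right hf.1 hx₀ (by linarith : x₀ < x₀ + ε₀)
      (fun t ht => hball ⟨by linarith [ht.1], ht.2⟩)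
  have hflt : Tendsto f (𝓝[<] x₀) (𝓝 (leftLim f x₀)) :=
    cx_bv_tendsto_left hf.1 hx₀ (by linarith : x₀ - ε₀ < x₀)
      (fun t ht => hball ⟨ht.1, by linarith [ht.2]⟩)
  have hnz : leftLim f x₀ ≠ 0 ∨ rightLim f x₀ ≠ 0 := by
    by_contra h
    push_neg at h
    apply hfx
    rw [hf.2 x₀ hx₀, h.1, h.2]
    ring
  rcases hnz with hL | hL
  · -- left limit nonzero : f ≠ 0 on some (l', x₀)
    have hmem : {t : ℝ | f t ≠ 0} ∈ 𝓝[<] x₀ :=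
      hflt (isOpen_compl_singleton.mem_nhds hL)
    obtain ⟨l', hl', hsub'⟩ := mem_nhdsLT_iff_exists_Ioo_subset.1 hmem
    refine key_contra a b α f hα hsupp hae (max l' (x₀ - ε₀)) x₀
      (max_lt hl' (by linarith)) ?_ ?_
    · intro t ht
      exact hball ⟨lt_of_le_of_lt (le_max_right _ _) ht.1, by linarith [ht.2]⟩
    · intro t ht
      exact hsub' ⟨lt_of_le_of_lt (le_max_left _ _) ht.1, ht.2⟩
  · -- right limit nonzero : f ≠ 0 on some (x₀, u')
    have hmem : {t : ℝ | f t ≠ 0} ∈ 𝓝[>] x₀ :=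
      hfrt (isOpen_compl_singleton.mem_nhds hL)
    obtain ⟨u', hu', hsub'⟩ := mem_nhdsGT_iff_exists_Ioo_subset.1 hmem
    refine key_contra a b α f hα hsupp hae x₀ (min u' (x₀ + ε₀))
      (lt_min hu' (by linarith)) ?_ ?_
    · intro t ht
      exact hball ⟨by linarith [ht.1], lt_of_lt_of_le ht.2 (min_le_right _ _)⟩
    · intro t ht
      exact hsub' ⟨ht.1, lt_of_lt_of_le ht.2 (min_le_left _ _)⟩
end
end

section
/- Let f ∈ BV_loc((a,b),ℝ) and let [s,t] ⊂ (a,b). If y₀ is a number strictly between f^-(s) and f^-(t), then there exists x₀ ∈ [s,t] such that y₀ lies between f^-(x₀) and f^+(x₀), inclusive. -/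
open Set Filter Function MeasureTheory Topology

noncomputable section

/-- A function of locally bounded variation on an open set has one-sided limits there. -/
lemma bv_tendsto_leftRight {s : Set ℝ} (hs : IsOpen s) {f : ℝ → ℝ}
    (hf : LocallyBoundedVariationOn f s) {x : ℝ} (hx : x ∈ s) :
    Tendsto f (𝓝[<] x) (𝓝 (leftLim f x)) ∧ Tendsto f (𝓝[>] x) (𝓝 (rightLim f x)) := by
  obtain ⟨p, q, hp, hq, rfl⟩ := hf.exists_monotoneOn_sub_monotoneOn
  obtain ⟨ε, hε, hball⟩ := Metric.isOpen_iff.1 hs x hx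
  rw [Real.ball_eq_Ioo] at hball
  have hlt : x - ε < x := by linarith
  have hgt : x < x + ε := by linarith
  have hIooL : Ioo (x - ε) x ⊆ s := fun y hy => hball ⟨hy.1, hy.2.trans hgt⟩
  have hIooR : Ioo x (x + ε) ⊆ s := fun y hy => hball ⟨hlt.trans hy.1, hy.2⟩
  have hneL : (Ioo (x - ε) x).Nonempty := nonempty_Ioo.2 hlt
  have hneR : (Ioo x (x + ε)).Nonempty := nonempty_Ioo.2 hgt
  have tendL : ∀ g : ℝ → ℝ, MonotoneOn g s →
      Tendsto g (𝓝[<] x) (𝓝 (sSup (g '' Ioo (x - ε) x))) := by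
    intro g hg
    refine MonotoneOn.tendsto_nhdsWithin_Ioo_left hneL (hg.mono hIooL) ?_
    exact ⟨g x, fun v ⟨u, hu, huv⟩ => huv ▸ hg (hIooL hu) hx hu.2.le⟩
  have tendR : ∀ g : ℝ → ℝ, MonotoneOn g s →
      Tendsto g (𝓝[>] x) (𝓝 (sInf (g '' Ioo x (x + ε)))) := by
    intro g hg
    refine MonotoneOn.tendsto_nhdsWithin_Ioo_right hneR (hg.mono hIooR) ?_
    exact ⟨g x, fun v ⟨u, hu, huv⟩ => huv ▸ hg hx (hIooR hu) hu.1.le⟩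
  have TL : Tendsto (p - q) (𝓝[<] x)
      (𝓝 (sSup (p '' Ioo (x - ε) x) - sSup (q '' Ioo (x - ε) x))) :=
    (tendL p hp).sub (tendL q hq)
  have TR : Tendsto (p - q) (𝓝[>] x)
      (𝓝 (sInf (p '' Ioo x (x + ε)) - sInf (q '' Ioo x (x + ε)))) :=
    (tendR p hp).sub (tendR q hq)
  constructor
  · rwa [leftLim_eq_of_tendsto TL]
  · rwa [rightLim_eq_of_tendsto TR]

/-- Core intermediate value argument. -/
lemma core_ivt (f : ℝ → ℝ) (s t y₀ : ℝ) (hst : s ≤ t)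
    (hL : ∀ x ∈ Icc s t, Tendsto f (𝓝[<] x) (𝓝 (leftLim f x)))
    (hR : ∀ x ∈ Icc s t, Tendsto f (𝓝[>] x) (𝓝 (rightLim f x)))
    (h1 : leftLim f s < y₀) (h2 : y₀ < leftLim f t) :
    ∃ x₀ ∈ Icc s t, leftLim f x₀ ≤ y₀ ∧ y₀ ≤ rightLim f x₀ := by
  set B : Set ℝ := {x | x ∈ Icc s t ∧ leftLim f x ≤ y₀} with hB
  have hsB : s ∈ B := ⟨⟨le_refl s, hst⟩, h1.le⟩
  have hBne : B.Nonempty := ⟨s, hsB⟩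
  have hBdd : BddAbove B := ⟨t, fun x hx => hx.1.2⟩
  set x₀ := sSup B with hx₀
  have hsx₀ : s ≤ x₀ := le_csSup hBdd hsB
  have hx₀t : x₀ ≤ t := csSup_le hBne fun x hx => hx.1.2
  have hx₀mem : x₀ ∈ Icc s t := ⟨hsx₀, hx₀t⟩
  have claim1 : leftLim f x₀ ≤ y₀ := by
    by_contra hcon
    push_neg at hcon
    set m := (y₀ + leftLim f x₀) / 2 with hm
    have hym : y₀ < m := by simp only [hm]; linarith
    have hmL : m < leftLim f x₀ := by simp only [hm]; linarith
    have hev : ∀ᶠ u in 𝓝[<] x₀, m < f u := (hL x₀ hx₀mem).eventually (eventually_gt_nhds hmL)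
    obtain ⟨l, hl, hsub⟩ := mem_nhdsLT_iff_exists_Ioo_subset.1 hev
    obtain ⟨x, hxB, hlx⟩ := exists_lt_of_lt_csSup hBne hl
    have hxx₀ : x ≤ x₀ := le_csSup hBdd hxB
    have : m ≤ leftLim f x := by
      refine ge_of_tendsto (hL x hxB.1) ?_
      filter_upwards [Ioo_mem_nhdsLT hlx] with u hu
      exact le_of_lt (hsub ⟨hu.1, hu.2.trans_le hxx₀⟩)
    exact absurd (this.trans hxB.2) hym.not_ge
  have hx₀lt : x₀ < t := by
    rcases lt_or_eq_of_le hx₀t with h | h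
    · exact h
    · rw [h] at claim1; exact absurd h2 (not_lt.2 claim1)
  refine ⟨x₀, hx₀mem, claim1, ?_⟩
  by_contra hcon
  push_neg at hcon
  set m := (rightLim f x₀ + y₀) / 2 with hm
  have hRm : rightLim f x₀ < m := by simp only [hm]; linarith
  have hmy : m < y₀ := by simp only [hm]; linarith
  have hev : ∀ᶠ u in 𝓝[>] x₀, f u < m := (hR x₀ hx₀mem).eventually (eventually_lt_nhds hRm)
  obtain ⟨r, hr, hsub⟩ := mem_nhdsGT_iff_exists_Ioo_subset.1 hev
  set x := (x₀ + min r t) / 2 with hxdef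
  have h1x : x₀ < x := by
    have : x₀ < min r t := lt_min hr hx₀lt
    simp only [hxdef]; linarith
  have h2x : x < min r t := by
    have : x₀ < min r t := lt_min hr hx₀lt
    simp only [hxdef]; linarith
  have hxmem : x ∈ Icc s t := ⟨hsx₀.trans h1x.le, (h2x.trans_le (min_le_right r t)).le⟩
  have hxB : x ∈ B := by
    refine ⟨hxmem, ?_⟩
    have : leftLim f x ≤ m := by
      refine le_of_tendsto (hL x hxmem) ?_
      filter_upwards [Ioo_mem_nhdsLT h1x] with u hu
      exact le_of_lt (hsub ⟨hu.1, hu.2.trans (h2x.trans_le (min_le_left r t))⟩)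
    exact this.trans hmy.le
  exact absurd (le_csSup hBdd hxB) h1x.not_ge

/-- Corollary 4.2: if `y₀` lies strictly between `f⁻(s)` and `f⁻(t)` for some
`[s,t] ⊆ (a,b)`, then `y₀` lies between `f⁻(x₀)` and `f⁺(x₀)`, inclusive, for some `x₀ ∈ [s,t]`. -/
theorem statement4 (a b : EReal) (hab : a < b) (f : ℝ → ℝ)
    (hf : LocallyBoundedVariationOn f (EI a b))
    (s t y₀ : ℝ) (hst : s ≤ t) (hsub : Icc s t ⊆ EI a b)
    (hy : (leftLim f s < y₀ ∧ y₀ < leftLim f t) ∨ (leftLim f t < y₀ ∧ y₀ < leftLim f s)) :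
    ∃ x₀ ∈ Icc s t,
      (leftLim f x₀ ≤ y₀ ∧ y₀ ≤ rightLim f x₀) ∨
      (rightLim f x₀ ≤ y₀ ∧ y₀ ≤ leftLim f x₀) := by
  have hopen : IsOpen (EI a b) := by
    have h : EI a b = (fun x : ℝ => (x : EReal)) ⁻¹' (Ioo a b) := rfl
    rw [h]
    exact isOpen_Ioo.preimage continuous_coe_real_ereal
  have hL : ∀ x ∈ Icc s t, Tendsto f (𝓝[<] x) (𝓝 (leftLim f x)) :=
    fun x hx => (bv_tendsto_leftRight hopen hf (hsub hx)).1
  have hR : ∀ x ∈ Icc s t, Tendsto f (𝓝[>] x) (𝓝 (rightLim f x)) :=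
    fun x hx => (bv_tendsto_leftRight hopen hf (hsub hx)).2
  rcases hy with ⟨h1, h2⟩ | ⟨h1, h2⟩
  · obtain ⟨x₀, hmem, hA, hB⟩ := core_ivt f s t y₀ hst hL hR h1 h2
    exact ⟨x₀, hmem, Or.inl ⟨hA, hB⟩⟩
  · set g : ℝ → ℝ := fun u => -f u with hg
    have hLg' : ∀ x ∈ Icc s t, leftLim g x = -leftLim f x := fun x hx =>
      leftLim_eq_of_tendsto (hL x hx).neg
    have hRg' : ∀ x ∈ Icc s t, rightLim g x = -rightLim f x := fun x hx =>
      rightLim_eq_of_tendsto (hR x hx).neg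
    have hLg : ∀ x ∈ Icc s t, Tendsto g (𝓝[<] x) (𝓝 (leftLim g x)) := by
      intro x hx; rw [hLg' x hx]; exact (hL x hx).neg
    have hRg : ∀ x ∈ Icc s t, Tendsto g (𝓝[>] x) (𝓝 (rightLim g x)) := by
      intro x hx; rw [hRg' x hx]; exact (hR x hx).neg
    have h1' : leftLim g s < -y₀ := by
      rw [hLg' s ⟨le_refl s, hst⟩]; linarith
    have h2' : -y₀ < leftLim g t := by
      rw [hLg' t ⟨hst, le_refl t⟩]; linarith
    obtain ⟨x₀, hmem, hA, hB⟩ := core_ivt g s t (-y₀) hst hLg hRg h1' h2'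
    rw [hLg' x₀ hmem] at hA
    rw [hRg' x₀ hmem] at hB
    exact ⟨x₀, hmem, Or.inr ⟨by linarith, by linarith⟩⟩
end
end

section
/- Let r ∈ [0,1] be fixed, let α be a strictly increasing function on (a,b), and let u be a real-valued r-balanced function on (a,b) such that du ≪ dα and du/dα is r-balanced on (a,b). If s < t are both in Z_{(a,b)}(u), then Z_{[s,t]}(du/dα) is not empty. -/
open Set Filter Function MeasureTheory Topology

noncomputable section

section helpers
variable {P Q f : ℝ → ℝ} {c d : ℝ}

lemma myclip_mem (hcd : c ≤ d) (x : ℝ) : min d (max c x) ∈ Icc c d :=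
  ⟨le_min hcd (le_max_left _ _), min_le_left _ _⟩

lemma myclip_eq (hx : x ∈ Icc c d) : min d (max c x) = x := by
  rw [max_eq_right hx.1, min_eq_right hx.2]

lemma bv_decomp {S : Set ℝ} (hf : LocallyBoundedVariationOn f S) (hcd : c ≤ d)
    (hsub : Icc c d ⊆ S) :
    ∃ p q : ℝ → ℝ, Monotone p ∧ Monotone q ∧ ∀ x ∈ Icc c d, f x = p x - q x := by
  have hf' : LocallyBoundedVariationOn f (Icc c d) := by
    intro x y hx hy
    have := hf x y (hsub hx) (hsub hy)
    exact BoundedVariationOn.mono this (by intro z hz; exact ⟨hsub hz.1, hz.2⟩)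
  obtain ⟨p, q, hp, hq, hpq⟩ := hf'.exists_monotoneOn_sub_monotoneOn
  refine ⟨fun x => p (min d (max c x)), fun x => q (min d (max c x)), ?_, ?_, ?_⟩
  · intro x y hxy
    exact hp (myclip_mem hcd x) (myclip_mem hcd y)
      (min_le_min le_rfl (max_le_max le_rfl hxy))
  · intro x y hxy
    exact hq (myclip_mem hcd x) (myclip_mem hcd y)
      (min_le_min le_rfl (max_le_max le_rfl hxy))
  · intro x hx
    simp only []
    rw [myclip_eq hx]
    exact congrFun hpq x

lemma lim_left (hP : Monotone P) (hQ : Monotone Q) (hf : ∀ x ∈ Icc c d, f x = P x - Q x)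
    {x : ℝ} (hx : x ∈ Ioc c d) :
    Tendsto f (𝓝[<] x) (𝓝 (leftLim P x - leftLim Q x)) ∧
      leftLim f x = leftLim P x - leftLim Q x := by
  have T : Tendsto f (𝓝[<] x) (𝓝 (leftLim P x - leftLim Q x)) := by
    refine Tendsto.congr' ?_ ((hP.tendsto_leftLim x).sub (hQ.tendsto_leftLim x))
    filter_upwards [Ioo_mem_nhdsLT_of_mem (⟨hx.1, le_rfl⟩ : x ∈ Ioc c x)] with y hy
    exact (hf y ⟨hy.1.le, hy.2.le.trans hx.2⟩).symm
  exact ⟨T, leftLim_eq_of_tendsto T⟩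

lemma lim_right (hP : Monotone P) (hQ : Monotone Q) (hf : ∀ x ∈ Icc c d, f x = P x - Q x)
    {x : ℝ} (hx : x ∈ Ico c d) :
    Tendsto f (𝓝[>] x) (𝓝 (rightLim P x - rightLim Q x)) ∧
      rightLim f x = rightLim P x - rightLim Q x := by
  have T : Tendsto f (𝓝[>] x) (𝓝 (rightLim P x - rightLim Q x)) := by
    refine Tendsto.congr' ?_ ((hP.tendsto_rightLim x).sub (hQ.tendsto_rightLim x))
    filter_upwards [Ioo_mem_nhdsGT_of_mem (⟨le_rfl, hx.2⟩ : x ∈ Ico x d)] with y hy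
    exact (hf y ⟨hx.1.trans hy.1.le, hy.2.le⟩).symm
  exact ⟨T, rightLim_eq_of_tendsto T⟩

lemma rl_tendsto_left (hP : Monotone P) (x : ℝ) :
    Tendsto (rightLim P) (𝓝[<] x) (𝓝 (leftLim P x)) := by
  apply tendsto_of_tendsto_of_tendsto_of_le_of_le' (hP.tendsto_leftLim x) tendsto_const_nhds
  · exact Eventually.of_forall fun y => hP.le_rightLim le_rfl
  · filter_upwards [self_mem_nhdsWithin] with y hy
    obtain ⟨z, hz1, hz2⟩ := exists_between (show y < x from hy)
    exact (hP.rightLim_le hz1).trans (hP.le_leftLim hz2)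

lemma lim_rl_left (hP : Monotone P) (hQ : Monotone Q) (hf : ∀ x ∈ Icc c d, f x = P x - Q x)
    {x : ℝ} (hx : x ∈ Ioc c d) :
    Tendsto (rightLim f) (𝓝[<] x) (𝓝 (leftLim f x)) := by
  have hL := lim_left hP hQ hf hx
  rw [hL.2]
  refine Tendsto.congr' ?_ ((rl_tendsto_left hP x).sub (rl_tendsto_left hQ x))
  filter_upwards [Ioo_mem_nhdsLT_of_mem (⟨hx.1, le_rfl⟩ : x ∈ Ioc c x)] with y hy
  exact (lim_right hP hQ hf ⟨hy.1.le, lt_of_lt_of_le hy.2 hx.2⟩).2.symm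

end helpers

lemma integrableOn_of_bdd {ρ : Measure ℝ} [IsFiniteMeasure ρ] {E : Set ℝ}
    (hE : MeasurableSet E) {w g : ℝ → ℝ} (hg : Measurable g)
    (hfg : ∀ x ∈ E, w x = g x) {M : ℝ} (hM : ∀ x ∈ E, |w x| ≤ M) :
    IntegrableOn w E ρ := by
  have hae : ∀ᵐ x ∂ρ.restrict E, x ∈ E := ae_restrict_mem hE
  have hsm : AEStronglyMeasurable w (ρ.restrict E) := by
    refine hg.aestronglyMeasurable.congr ?_
    filter_upwards [hae] with x hx
    exact (hfg x hx).symm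
  exact Integrable.mono' (integrable_const M) hsm
    (by filter_upwards [hae] with x hx; simpa using hM x hx)

lemma signedMeasure_apply_jordan (ν : SignedMeasure ℝ) {E : Set ℝ} (hE : MeasurableSet E) :
    ν E = (ν.toJordanDecomposition.posPart E).toReal -
      (ν.toJordanDecomposition.negPart E).toReal := by
  conv_lhs => rw [← ν.toSignedMeasure_toJordanDecomposition]
  rw [JordanDecomposition.toSignedMeasure, MeasureTheory.VectorMeasure.sub_apply,
    Measure.toSignedMeasure_apply_measurable hE, Measure.toSignedMeasure_apply_measurable hE]
  simp only [measureReal_def]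

lemma jordan_restrict_eq {ν : SignedMeasure ℝ} {μ : Measure ℝ} [IsFiniteMeasure μ] {c t : ℝ}
    (hct : c ≤ t)
    (h : ∀ x y : ℝ, c ≤ x → x ≤ y → y ≤ t → ν (Ioc x y) = (μ (Ioc x y)).toReal) :
    ν.toJordanDecomposition.posPart.restrict (Ioc c t) =
      (ν.toJordanDecomposition.negPart + μ).restrict (Ioc c t) := by
  set P := ν.toJordanDecomposition.posPart with hPdef
  set N := ν.toJordanDecomposition.negPart with hNdef
  have key : ∀ x y : ℝ, c ≤ x → x ≤ y → y ≤ t → P (Ioc x y) = N (Ioc x y) + μ (Ioc x y) := by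
    intro x y h1 h2 h3
    have h4 := h x y h1 h2 h3
    rw [signedMeasure_apply_jordan ν measurableSet_Ioc] at h4
    have hP : P (Ioc x y) ≠ ⊤ := measure_ne_top _ _
    have hN : N (Ioc x y) ≠ ⊤ := measure_ne_top _ _
    have hμ : μ (Ioc x y) ≠ ⊤ := measure_ne_top _ _
    rw [← ENNReal.toReal_eq_toReal_iff' hP (by finiteness), ENNReal.toReal_add hN hμ]
    linarith
  refine MeasureTheory.ext_of_generate_finite {S : Set ℝ | ∃ l u, l < u ∧ Ioc l u = S} ?_ ?_ ?_ ?_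
  · exact BorelSpace.measurable_eq.trans (borel_eq_generateFrom_Ioc ℝ)
  · exact isPiSystem_Ioc (id : ℝ → ℝ) (id : ℝ → ℝ)
  · rintro S ⟨l, u, hlu, rfl⟩
    rw [Measure.restrict_apply measurableSet_Ioc, Measure.restrict_apply measurableSet_Ioc,
      Ioc_inter_Ioc, Measure.add_apply]
    rcases le_or_gt (l ⊔ c) (u ⊓ t) with hle | hlt
    · exact key _ _ le_sup_right hle inf_le_right
    · rw [Ioc_eq_empty (by exact fun hc => absurd (le_of_lt hc) (not_le.2 hlt))]; simp
  · rw [Measure.restrict_apply_univ, Measure.restrict_apply_univ, Measure.add_apply]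
    exact key c t le_rfl hct le_rfl

lemma sInt_eq_integral {ν : SignedMeasure ℝ} {μ : Measure ℝ} {J E : Set ℝ} {w : ℝ → ℝ}
    (hjordan : ν.toJordanDecomposition.posPart.restrict J =
      (ν.toJordanDecomposition.negPart + μ).restrict J)
    (hE : MeasurableSet E) (hEJ : E ⊆ J)
    (hN : IntegrableOn w E ν.toJordanDecomposition.negPart) (hμ : IntegrableOn w E μ) :
    sInt ν w E = ∫ x in E, w x ∂μ := by
  have h1 : ν.toJordanDecomposition.posPart.restrict E =
      ν.toJordanDecomposition.negPart.restrict E + μ.restrict E := by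
    have e1 : ν.toJordanDecomposition.posPart.restrict E =
        (ν.toJordanDecomposition.posPart.restrict J).restrict E := by
      rw [Measure.restrict_restrict hE, inter_eq_self_of_subset_left hEJ]
    rw [e1, hjordan, Measure.restrict_restrict hE, inter_eq_self_of_subset_left hEJ,
      Measure.restrict_add]
  have h2 : (∫ x in E, w x ∂ν.toJordanDecomposition.posPart) =
      (∫ x in E, w x ∂ν.toJordanDecomposition.negPart) + ∫ x in E, w x ∂μ := by
    rw [show (∫ x in E, w x ∂ν.toJordanDecomposition.posPart) =
        ∫ x, w x ∂(ν.toJordanDecomposition.posPart.restrict E) from rfl, h1]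
    exact integral_add_measure hN hμ
  rw [sInt, h2]; ring

lemma core (r : ℝ) (hr : r ∈ Icc (0:ℝ) 1)
    (ν : SignedMeasure ℝ) (μ : Measure ℝ) [IsFiniteMeasure μ]
    (w Lw Rw Ru Lu : ℝ → ℝ) (c s t : ℝ) (hcs : c < s) (hst : s < t)
    (hwbal : ∀ x ∈ Icc s t, w x = r * Lw x + (1 - r) * Rw x)
    (hwlimL : ∀ x ∈ Icc s t, Tendsto w (𝓝[<] x) (𝓝 (Lw x)))
    (hwlimR : ∀ x ∈ Icc s t, Tendsto w (𝓝[>] x) (𝓝 (Rw x)))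
    (hulim_s : Tendsto Ru (𝓝[<] s) (𝓝 (Lu s)))
    (hulim_t : Tendsto Ru (𝓝[<] t) (𝓝 (Lu t)))
    (hrep : ∀ x ∈ Icc c t, ∀ y ∈ Icc c t, x ≤ y → ν (Ioc x y) = Ru y - Ru x)
    (heq : ∀ E : Set ℝ, E ⊆ Ioc c t → MeasurableSet E → ν E = ∫ x in E, w x ∂μ)
    (hInt : IntegrableOn w (Ioc c t) μ)
    (hμpos : ∀ x y : ℝ, s ≤ x → x < y → y ≤ t → 0 < (μ (Ioc x y)).toReal)
    (hsgn : ∀ x ∈ Icc s t, 0 < Lw x * Rw x)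
    (hbase : 0 < Lw s)
    (hzs : Lu s * Ru s ≤ 0) (hzt : Lu t * Ru t ≤ 0) : False := by
  -- Part A: positivity of w on [s,t]
  have posbothL : ∀ x ∈ Icc s t, 0 ≤ Lw x → 0 < Lw x ∧ 0 < Rw x := by
    intro x hx h0
    have hp := hsgn x hx
    have hL : 0 < Lw x := by
      rcases eq_or_lt_of_le h0 with h | h
      · exfalso; rw [← h] at hp; simp at hp
      · exact h
    refine ⟨hL, ?_⟩
    by_contra hc
    push_neg at hc
    nlinarith
  have hwpos' : ∀ y ∈ Icc s t, 0 < Lw y → 0 < Rw y → 0 < w y := by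
    intro y hy h1 h2
    rw [hwbal y hy]
    rcases eq_or_lt_of_le hr.1 with h | h
    · rw [← h]; simpa using h2
    · have e1 : 0 < r * Lw y := mul_pos h h1
      have e2 : 0 ≤ (1 - r) * Rw y := mul_nonneg (by linarith [hr.2]) h2.le
      linarith
  set A : Set ℝ := {x | x ∈ Icc s t ∧ ∀ y ∈ Icc s x, 0 < Lw y ∧ 0 < Rw y} with hA
  have hsA : s ∈ A := by
    refine ⟨⟨le_rfl, hst.le⟩, fun y hy => ?_⟩
    have : y = s := le_antisymm hy.2 hy.1
    subst this
    exact posbothL y ⟨le_rfl, hst.le⟩ hbase.le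
  have hAne : A.Nonempty := ⟨s, hsA⟩
  have hbddA : BddAbove A := ⟨t, fun x hx => hx.1.2⟩
  set m := sSup A with hm
  have hsm : s ≤ m := le_csSup hbddA hsA
  have hmt : m ≤ t := csSup_le hAne fun x hx => hx.1.2
  have hIcoProp : ∀ y ∈ Ico s m, 0 < Lw y ∧ 0 < Rw y := by
    intro y hy
    obtain ⟨aA, haA, hya⟩ := exists_lt_of_lt_csSup hAne hy.2
    exact haA.2 y ⟨hy.1, hya.le⟩
  have hmprop : 0 < Lw m ∧ 0 < Rw m := by
    refine posbothL m ⟨hsm, hmt⟩ ?_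
    rcases eq_or_lt_of_le hsm with h | h
    · rw [← h]; exact hbase.le
    · refine ge_of_tendsto (hwlimL m ⟨hsm, hmt⟩) ?_
      filter_upwards [Ioo_mem_nhdsLT_of_mem (⟨h, le_rfl⟩ : m ∈ Ioc s m)] with y hy
      have hy' : y ∈ Ico s m := ⟨hy.1.le, hy.2⟩
      have := hIcoProp y hy'
      exact (hwpos' y ⟨hy'.1, hy'.2.le.trans hmt⟩ this.1 this.2).le
  have hmA : m ∈ A := by
    refine ⟨⟨hsm, hmt⟩, fun y hy => ?_⟩
    rcases lt_or_eq_of_le hy.2 with h | h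
    · exact hIcoProp y ⟨hy.1, h⟩
    · rw [h]; exact hmprop
  have hmeqt : m = t := by
    by_contra hne'
    have hmlt : m < t := lt_of_le_of_ne hmt hne'
    have hev : ∀ᶠ y in 𝓝[>] m, 0 < w y :=
      (hwlimR m ⟨hsm, hmt⟩).eventually (eventually_gt_nhds hmprop.2)
    obtain ⟨δ', hδ'mem, hδ'⟩ := mem_nhdsGT_iff_exists_Ioo_subset.1 hev
    set e := min δ' t with he
    have hme : m < e := lt_min hδ'mem hmlt
    have hwab : ∀ z ∈ Ioo m e, 0 < w z := fun z hz =>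
      hδ' ⟨hz.1, hz.2.trans_le (min_le_left _ _)⟩
    set y₁ := (m + e) / 2 with hy₁
    have hy₁mem : y₁ ∈ Ioo m e := ⟨by simp only [hy₁]; linarith, by simp only [hy₁]; linarith⟩
    have hy₁t : y₁ ≤ t := le_of_lt (hy₁mem.2.trans_le (min_le_right _ _))
    have hy₁A : y₁ ∈ A := by
      refine ⟨⟨hsm.trans hy₁mem.1.le, hy₁t⟩, fun y hy => ?_⟩
      rcases le_or_gt y m with h | h
      · exact hmA.2 y ⟨hy.1, h⟩
      · have hyIoo : y ∈ Ioc m y₁ := ⟨h, hy.2⟩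
        have hyt : y ∈ Icc s t := ⟨hy.1, hy.2.trans hy₁t⟩
        have hL : 0 ≤ Lw y := by
          refine ge_of_tendsto (hwlimL y hyt) ?_
          filter_upwards [Ioo_mem_nhdsLT_of_mem (⟨h, le_rfl⟩ : y ∈ Ioc m y)] with z hz
          exact (hwab z ⟨hz.1, hz.2.trans_le (hyIoo.2.trans hy₁mem.2.le)⟩).le
        exact posbothL y hyt hL
    have := le_csSup hbddA hy₁A
    have : y₁ ≤ m := this
    linarith [hy₁mem.1]
  have hprop : ∀ x ∈ Icc s t, 0 < Lw x ∧ 0 < Rw x := by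
    intro x hx
    exact hmA.2 x ⟨hx.1, by rw [hmeqt]; exact hx.2⟩
  have hwpos : ∀ x ∈ Icc s t, 0 < w x := fun x hx =>
    hwpos' x hx (hprop x hx).1 (hprop x hx).2
  -- Part B
  have hval : ∀ x y : ℝ, c ≤ x → x ≤ y → y ≤ t → Ru y - Ru x = ∫ z in Ioc x y, w z ∂μ := by
    intro x y h1 h2 h3
    rw [← hrep x ⟨h1, h2.trans h3⟩ y ⟨h1.trans h2, h3⟩ h2]
    exact heq _ (Ioc_subset_Ioc h1 h3) measurableSet_Ioc
  have h2 : Lu t ≤ Ru t := by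
    refine le_of_tendsto hulim_t ?_
    filter_upwards [Ioo_mem_nhdsLT_of_mem (⟨hst, le_rfl⟩ : t ∈ Ioc s t)] with y hy
    have hv := hval y t (hcs.le.trans hy.1.le) hy.2.le le_rfl
    have hnn : 0 ≤ ∫ z in Ioc y t, w z ∂μ :=
      setIntegral_nonneg measurableSet_Ioc fun z hz =>
        (hwpos z ⟨hy.1.le.trans hz.1.le, hz.2⟩).le
    linarith
  set y₀ := (s + t) / 2 with hy₀def
  have hy₀1 : s < y₀ := by simp only [hy₀def]; linarith
  have hy₀2 : y₀ < t := by simp only [hy₀def]; linarith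
  set K := ∫ z in Ioc s y₀, w z ∂μ with hKdef
  have hKint : IntegrableOn w (Ioc s y₀) μ := hInt.mono_set (Ioc_subset_Ioc hcs.le hy₀2.le)
  have hK : 0 < K := by
    rw [hKdef, setIntegral_pos_iff_support_of_nonneg_ae ?_ hKint]
    · have hb : 0 < μ (Ioc s y₀) :=
        (ENNReal.toReal_pos_iff.1 (hμpos s y₀ le_rfl hy₀1 hy₀2.le)).1
      refine lt_of_lt_of_le hb (measure_mono fun z hz => ?_)
      exact ⟨(hwpos z ⟨hz.1.le, hz.2.trans hy₀2.le⟩).ne', hz⟩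
    · filter_upwards [ae_restrict_mem measurableSet_Ioc] with z hz
      exact (hwpos z ⟨hz.1.le, hz.2.trans hy₀2.le⟩).le
  have h3 : Ru s + K ≤ Lu t := by
    refine ge_of_tendsto hulim_t ?_
    filter_upwards [Ioo_mem_nhdsLT_of_mem (⟨hy₀2, le_rfl⟩ : t ∈ Ioc y₀ t)] with y hy
    have hint2 : IntegrableOn w (Ioc y₀ y) μ :=
      hInt.mono_set (Ioc_subset_Ioc (hcs.le.trans hy₀1.le) hy.2.le)
    have hsplit : ∫ z in Ioc s y, w z ∂μ = K + ∫ z in Ioc y₀ y, w z ∂μ := by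
      rw [hKdef, ← setIntegral_union (Set.Ioc_disjoint_Ioc_of_le le_rfl) measurableSet_Ioc hKint hint2,
        Ioc_union_Ioc_eq_Ioc hy₀1.le hy.1.le]
    have hv := hval s y hcs.le (hy₀1.trans hy.1).le hy.2.le
    have hnn : 0 ≤ ∫ z in Ioc y₀ y, w z ∂μ :=
      setIntegral_nonneg measurableSet_Ioc fun z hz =>
        (hwpos z ⟨hy₀1.le.trans hz.1.le, hz.2.trans hy.2.le⟩).le
    linarith
  -- Step 4 : Lu s ≤ Ru s via dominated convergence
  have h4 : Lu s ≤ Ru s := by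
    set yseq : ℕ → ℝ := fun n => s - (s - c) / (n + 1) with hyseq
    have hsc : 0 < s - c := by linarith
    have hyc : ∀ n : ℕ, c ≤ yseq n := by
      intro n
      have h1 : (0:ℝ) < n + 1 := by positivity
      have : (s - c) / (n + 1) ≤ s - c := by
        rw [div_le_iff₀ h1]; nlinarith
      simp only [hyseq]; linarith
    have hyslt : ∀ n : ℕ, yseq n < s := by
      intro n
      have : 0 < (s - c) / (n + 1) := by positivity
      simp only [hyseq]; linarith
    have hlim : Tendsto yseq atTop (𝓝 s) := by
      have h0 : Tendsto (fun n : ℕ => (s - c) / (n + 1)) atTop (𝓝 0) := by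
        apply Tendsto.div_atTop (tendsto_const_nhds)
        exact tendsto_atTop_add_const_right _ _ tendsto_natCast_atTop_atTop
      have h1 : Tendsto (fun n : ℕ => s - (s - c) / (n + 1)) atTop (𝓝 (s - 0)) :=
        Tendsto.sub tendsto_const_nhds h0
      simpa using h1
    have hlim' : Tendsto yseq atTop (𝓝[<] s) :=
      tendsto_nhdsWithin_iff.2 ⟨hlim, Eventually.of_forall fun n => hyslt n⟩
    have hL1 : Tendsto (fun n => ν (Ioc (yseq n) s)) atTop (𝓝 (Ru s - Lu s)) := by
      have he : ∀ n, ν (Ioc (yseq n) s) = Ru s - Ru (yseq n) := fun n =>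
        hrep _ ⟨hyc n, (hyslt n).le.trans hst.le⟩ s ⟨hcs.le, hst.le⟩ (hyslt n).le
      refine Tendsto.congr (fun n => (he n).symm) ?_
      exact tendsto_const_nhds.sub (hulim_s.comp hlim')
    set ρ := μ.restrict (Ioc c s) with hρ
    haveI : IsFiniteMeasure ρ := by
      constructor
      rw [hρ, Measure.restrict_apply_univ]
      exact measure_lt_top _ _
    have hwρint : Integrable w ρ := hInt.mono_set (Ioc_subset_Ioc_right hst.le)
    have habs : Integrable (fun x => |w x|) ρ := hwρint.abs
    have hDCT : Tendsto (fun n => ∫ x, (Ioc (yseq n) s).indicator w x ∂ρ) atTop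
        (𝓝 (∫ x, ({s} : Set ℝ).indicator w x ∂ρ)) := by
      refine tendsto_integral_of_dominated_convergence (fun x => |w x|)
        (fun n => hwρint.1.indicator measurableSet_Ioc) habs
        (fun n => Eventually.of_forall fun x => ?_) (Eventually.of_forall fun x => ?_)
      · by_cases hx : x ∈ Ioc (yseq n) s
        · rw [indicator_of_mem hx, Real.norm_eq_abs]
        · rw [indicator_of_notMem hx]; simp
      · by_cases hxx : x = s
        · subst hxx
          have he : ∀ n, (Ioc (yseq n) x).indicator w x = w x := fun n =>
            indicator_of_mem (mem_Ioc.2 ⟨hyslt n, le_rfl⟩) w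
          rw [indicator_of_mem (mem_singleton x) w]
          exact Tendsto.congr (fun n => (he n).symm) tendsto_const_nhds
        · have hx : x ≠ s := hxx
          have hnot : x ∉ ({s} : Set ℝ) := by simpa using hx
          rw [indicator_of_notMem hnot w]
          rcases lt_or_ge x s with hxs | hxs
          · refine Tendsto.congr' ?_ tendsto_const_nhds
            filter_upwards [hlim.eventually (eventually_gt_nhds hxs)] with n hn
            exact (indicator_of_notMem (fun hmem => absurd hmem.1 (not_lt.2 hn.le)) w).symm
          · have hsx : s < x := lt_of_le_of_ne hxs (Ne.symm hx)
            refine Tendsto.congr (fun n => ?_) tendsto_const_nhds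
            exact (indicator_of_notMem (fun hmem => absurd hmem.2 (not_le.2 hsx)) w).symm
    have hIocρ : ∀ n, ∫ x, (Ioc (yseq n) s).indicator w x ∂ρ = ν (Ioc (yseq n) s) := by
      intro n
      rw [integral_indicator measurableSet_Ioc]
      have : ρ.restrict (Ioc (yseq n) s) = μ.restrict (Ioc (yseq n) s) := by
        rw [hρ, Measure.restrict_restrict measurableSet_Ioc,
          inter_eq_self_of_subset_left (Ioc_subset_Ioc_left (hyc n))]
      rw [show (∫ x in Ioc (yseq n) s, w x ∂ρ) = ∫ x, w x ∂(ρ.restrict (Ioc (yseq n) s)) from rfl,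
        this]
      exact (heq _ (Ioc_subset_Ioc (hyc n) hst.le) measurableSet_Ioc).symm
    have hsing : ∫ x, ({s} : Set ℝ).indicator w x ∂ρ = (μ {s}).toReal * w s := by
      rw [integral_indicator (measurableSet_singleton s)]
      have : ρ.restrict {s} = μ.restrict {s} := by
        rw [hρ, Measure.restrict_restrict (measurableSet_singleton s),
          inter_eq_self_of_subset_left (singleton_subset_iff.2 (mem_Ioc.2 ⟨hcs, le_rfl⟩))]
      rw [show (∫ x in ({s} : Set ℝ), w x ∂ρ) = ∫ x, w x ∂(ρ.restrict {s}) from rfl, this,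
        Measure.restrict_singleton, integral_smul_measure, integral_dirac, smul_eq_mul]
    have hL2 : Tendsto (fun n => ν (Ioc (yseq n) s)) atTop (𝓝 ((μ {s}).toReal * w s)) := by
      rw [← hsing]
      exact Tendsto.congr (fun n => hIocρ n) hDCT
    have hkey := tendsto_nhds_unique hL1 hL2
    have hws : 0 < w s := hwpos s ⟨le_rfl, hst.le⟩
    nlinarith [ENNReal.toReal_nonneg (a := μ {s})]
  -- final contradiction
  have hRus : 0 ≤ Ru s := by nlinarith
  have hLut : 0 < Lu t := by linarith
  have hRut : 0 < Ru t := lt_of_lt_of_le hLut h2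
  nlinarith

/-- Mean Value Theorem 4.3: if `s < t` both lie in `Z_{(a,b)}(u)` then
`Z_{[s,t]}(du/dα)` is nonempty. -/
theorem statement5 (a b : EReal) (hab : a < b) (r : ℝ) (hr : r ∈ Icc (0 : ℝ) 1)
    (α u w : ℝ → ℝ) (hα : StrictMonoOn α (EI a b))
    (hu : RBalanced r (EI a b) u) (hw : RBalanced r (EI a b) w)
    (hdu : MeasureEqOn (EI a b) u (fun _ : Fin 1 => w) (fun _ => α))
    (s t : ℝ) (hst : s < t)
    (hs : s ∈ ZSet u (EI a b)) (ht : t ∈ ZSet u (EI a b)) :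
    (ZSet w (Icc s t)).Nonempty := by
  by_contra hne
  rw [not_nonempty_iff_eq_empty] at hne
  have hsgn0 : ∀ x ∈ Icc s t, 0 < leftLim w x * rightLim w x := by
    intro x hx
    by_contra hcon
    have hmem : x ∈ ZSet w (Icc s t) := ⟨hx, not_lt.1 hcon⟩
    rw [hne] at hmem
    exact hmem
  have hsI : s ∈ EI a b := hs.1
  have htI : t ∈ EI a b := ht.1
  obtain ⟨c, hac, hcs0⟩ := EReal.lt_iff_exists_real_btwn.1 hsI.1
  obtain ⟨d, htd0, hdb⟩ := EReal.lt_iff_exists_real_btwn.1 htI.2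
  have hcs : c < s := by exact_mod_cast hcs0
  have htd : t < d := by exact_mod_cast htd0
  have hcd : c ≤ d := by linarith
  have hsub : Icc c d ⊆ EI a b := by
    intro x hx
    exact ⟨lt_of_lt_of_le hac (by exact_mod_cast hx.1),
      lt_of_le_of_lt (show (x : EReal) ≤ (d : EReal) by exact_mod_cast hx.2) hdb⟩
  have hcI : c ∈ EI a b := hsub ⟨le_rfl, hcd⟩
  have hdI : d ∈ EI a b := hsub ⟨hcd, le_rfl⟩
  obtain ⟨Pu, Qu, hPu, hQu, hu'⟩ := bv_decomp hu.1 hcd hsub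
  obtain ⟨Pw, Qw, hPw, hQw, hw'⟩ := bv_decomp hw.1 hcd hsub
  obtain ⟨νu, να, hνu, hνα, hEq⟩ := hdu c hcI d hdI (by linarith)
  have hrepα := hνα 0
  set αe : ℝ → ℝ := fun x => α (min d (max c x)) with hαedef
  have hαmono : Monotone αe := by
    intro x y hxy
    exact hα.monotoneOn (hsub (myclip_mem hcd x)) (hsub (myclip_mem hcd y))
      (min_le_min le_rfl (max_le_max le_rfl hxy))
  set μ0 := hαmono.stieltjesFunction.measure with hμ0
  set μ := μ0.restrict (Ioc c t) with hμdef
  haveI hfin : IsFiniteMeasure μ := by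
    constructor
    rw [hμdef, Measure.restrict_apply_univ, hμ0, StieltjesFunction.measure_Ioc]
    exact ENNReal.ofReal_lt_top
  have hαright : ∀ x ∈ Ico c d, rightLim αe x = rightLim α x := by
    intro x hx
    refine (rightLim_eq_of_tendsto ?_).symm
    refine Tendsto.congr' ?_ (hαmono.tendsto_rightLim x)
    filter_upwards [Ioo_mem_nhdsGT_of_mem (mem_Ico.2 ⟨le_rfl, hx.2⟩)] with y hy
    simp only [hαedef]
    rw [myclip_eq ⟨hx.1.trans hy.1.le, hy.2.le⟩]
  have hμIoc : ∀ x y : ℝ, c ≤ x → x ≤ y → y ≤ t →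
      μ (Ioc x y) = ENNReal.ofReal (rightLim α y - rightLim α x) := by
    intro x y h1 h2 h3
    rw [hμdef, Measure.restrict_apply measurableSet_Ioc,
      inter_eq_self_of_subset_left (Ioc_subset_Ioc h1 h3), hμ0, StieltjesFunction.measure_Ioc,
      hαmono.stieltjesFunction_eq, hαmono.stieltjesFunction_eq,
      hαright x ⟨h1, lt_of_le_of_lt (h2.trans h3) htd⟩,
      hαright y ⟨h1.trans h2, lt_of_le_of_lt h3 htd⟩]
  have hrlmono : ∀ x y : ℝ, c ≤ x → x ≤ y → y ≤ t → rightLim α x ≤ rightLim α y := by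
    intro x y h1 h2 h3
    rcases eq_or_lt_of_le h2 with h | h
    · rw [h]
    · rw [← hαright x ⟨h1, by linarith⟩, ← hαright y ⟨by linarith, by linarith⟩]
      obtain ⟨z, hz1, hz2⟩ := exists_between h
      exact (hαmono.rightLim_le hz1).trans (hαmono.le_rightLim hz2.le)
  have hkey : ∀ x y : ℝ, c ≤ x → x ≤ y → y ≤ t →
      (να 0) (Ioc x y) = (μ (Ioc x y)).toReal := by
    intro x y h1 h2 h3
    rw [hμIoc x y h1 h2 h3, ENNReal.toReal_ofReal (by linarith [hrlmono x y h1 h2 h3])]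
    exact hrepα x ⟨h1, h2.trans (h3.trans htd.le)⟩ y ⟨h1.trans h2, h3.trans htd.le⟩ h2
  have hjordan := jordan_restrict_eq (show c ≤ t by linarith) hkey
  set g : ℝ → ℝ := fun x => Pw x - Qw x with hg
  have hgm : Measurable g := hPw.measurable.sub hQw.measurable
  set M : ℝ := |Pw c| + |Pw d| + |Qw c| + |Qw d| with hM
  have hbd : ∀ x ∈ Icc c d, |w x| ≤ M := by
    intro x hx
    rw [hw' x hx]
    have e1 : Pw c ≤ Pw x := hPw hx.1
    have e2 : Pw x ≤ Pw d := hPw hx.2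
    have e3 : Qw c ≤ Qw x := hQw hx.1
    have e4 : Qw x ≤ Qw d := hQw hx.2
    have f1 := le_abs_self (Pw d); have f2 := neg_abs_le (Pw c)
    have f3 := le_abs_self (Qw d); have f4 := neg_abs_le (Qw c)
    have g1 := abs_nonneg (Pw c); have g2 := abs_nonneg (Pw d)
    have g3 := abs_nonneg (Qw c); have g4 := abs_nonneg (Qw d)
    rw [abs_le, hM]
    constructor <;> linarith
  have hIocIcc : Ioc c t ⊆ Icc c d := fun z hz => ⟨hz.1.le, hz.2.trans htd.le⟩
  have hIntw : ∀ (ρ' : Measure ℝ) [IsFiniteMeasure ρ'], ∀ E : Set ℝ, E ⊆ Ioc c t →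
      MeasurableSet E → IntegrableOn w E ρ' := by
    intro ρ' hinst E hE hEm
    exact integrableOn_of_bdd hEm hgm (fun x hx => hw' x (hIocIcc (hE hx)))
      (fun x hx => hbd x (hIocIcc (hE hx)))
  have heqν : ∀ E : Set ℝ, E ⊆ Ioc c t → MeasurableSet E → νu E = ∫ x in E, w x ∂μ := by
    intro E hE hEm
    rw [hEq E (hE.trans (Ioc_subset_Ioc_right htd.le)) hEm, Fin.sum_univ_one]
    exact sInt_eq_integral hjordan hEm hE (hIntw _ E hE hEm) (hIntw _ E hE hEm)
  have huL_s : Tendsto (rightLim u) (𝓝[<] s) (𝓝 (leftLim u s)) :=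
    lim_rl_left hPu hQu hu' (mem_Ioc.2 ⟨hcs, by linarith⟩)
  have huL_t : Tendsto (rightLim u) (𝓝[<] t) (𝓝 (leftLim u t)) :=
    lim_rl_left hPu hQu hu' (mem_Ioc.2 ⟨by linarith, by linarith⟩)
  have hwlimsL : ∀ x ∈ Icc s t, Tendsto w (𝓝[<] x) (𝓝 (leftLim w x)) := by
    intro x hx
    have h := lim_left hPw hQw hw'
      (show x ∈ Ioc c d from mem_Ioc.2 ⟨by linarith [hx.1], by linarith [hx.2]⟩)
    rw [h.2]
    exact h.1
  have hwlimsR : ∀ x ∈ Icc s t, Tendsto w (𝓝[>] x) (𝓝 (rightLim w x)) := by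
    intro x hx
    have h := lim_right hPw hQw hw'
      (show x ∈ Ico c d from mem_Ico.2 ⟨by linarith [hx.1], by linarith [hx.2]⟩)
    rw [h.2]
    exact h.1
  have hrepu : ∀ x ∈ Icc c t, ∀ y ∈ Icc c t, x ≤ y →
      νu (Ioc x y) = rightLim u y - rightLim u x := by
    intro x hx y hy hxy
    exact hνu x ⟨hx.1, hx.2.trans htd.le⟩ y ⟨hy.1, hy.2.trans htd.le⟩ hxy
  have hμpos : ∀ x y : ℝ, s ≤ x → x < y → y ≤ t → 0 < (μ (Ioc x y)).toReal := by
    intro x y h1 h2 h3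
    rw [hμIoc x y (by linarith) h2.le h3]
    obtain ⟨z, hz1, hz2⟩ := exists_between h2
    obtain ⟨z', hz1', hz2'⟩ := exists_between hz1
    have hzmem : z ∈ Icc c d := ⟨by linarith, by linarith⟩
    have hz'mem : z' ∈ Icc c d := ⟨by linarith, by linarith⟩
    have e1 : rightLim α x ≤ α z' := by
      rw [← hαright x ⟨by linarith, by linarith⟩]
      have h5 := hαmono.rightLim_le hz1'
      rwa [show αe z' = α z' by simp only [hαedef]; rw [myclip_eq hz'mem]] at h5
    have e2 : α z' < α z := hα (hsub hz'mem) (hsub hzmem) hz2'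
    have e3 : α z ≤ rightLim α y := by
      rw [← hαright y ⟨by linarith, by linarith⟩]
      have h5 := hαmono.le_rightLim hz2.le
      rwa [show αe z = α z by simp only [hαedef]; rw [myclip_eq hzmem]] at h5
    rw [ENNReal.toReal_ofReal (by linarith)]
    linarith
  have hIntmain : IntegrableOn w (Ioc c t) μ :=
    hIntw μ (Ioc c t) subset_rfl measurableSet_Ioc
  have hLws : leftLim w s ≠ 0 := by
    intro h
    have := hsgn0 s ⟨le_rfl, hst.le⟩
    rw [h] at this
    simp at this
  have hxEI : ∀ x ∈ Icc s t, x ∈ EI a b := fun x hx =>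
    hsub ⟨by linarith [hx.1], by linarith [hx.2]⟩
  rcases hLws.lt_or_gt with hneg | hpos
  · have nwbal : ∀ x ∈ Icc s t, -w x = r * -leftLim w x + (1 - r) * -rightLim w x :=
      fun x hx => by rw [hw.2 x (hxEI x hx)]; ring
    have nrep : ∀ x ∈ Icc c t, ∀ y ∈ Icc c t, x ≤ y →
        (-νu) (Ioc x y) = -rightLim u y - -rightLim u x := fun x hx y hy hxy => by
      rw [MeasureTheory.VectorMeasure.neg_apply, hrepu x hx y hy hxy]; ring
    have nheq : ∀ E : Set ℝ, E ⊆ Ioc c t → MeasurableSet E →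
        (-νu) E = ∫ x in E, -w x ∂μ := fun E hE hEm => by
      rw [MeasureTheory.VectorMeasure.neg_apply, heqν E hE hEm, integral_neg]
    have nsgn : ∀ x ∈ Icc s t, 0 < -leftLim w x * -rightLim w x := fun x hx => by
      nlinarith [hsgn0 x hx]
    have nzs : -leftLim u s * -rightLim u s ≤ 0 := by nlinarith [hs.2]
    have nzt : -leftLim u t * -rightLim u t ≤ 0 := by nlinarith [ht.2]
    exact core r hr (-νu) μ (fun x => -w x) (fun x => -leftLim w x) (fun x => -rightLim w x)
      (fun x => -rightLim u x) (fun x => -leftLim u x) c s t hcs hst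
      nwbal
      (fun x hx => (hwlimsL x hx).neg)
      (fun x hx => (hwlimsR x hx).neg)
      huL_s.neg huL_t.neg
      nrep nheq
      hIntmain.neg hμpos nsgn (neg_pos.2 hneg) nzs nzt
  · exact core r hr νu μ w (leftLim w) (rightLim w) (rightLim u) (leftLim u) c s t hcs hst
      (fun x hx => hw.2 x (hxEI x hx))
      hwlimsL hwlimsR huL_s huL_t hrepu heqν hIntmain hμpos hsgn0 hpos hs.2 ht.2
end
end

section
/- Assume r ∈ [0,1] is fixed, α is strictly increasing on (a,b), β ∈ BV_loc((a,b),ℝ), and θ_{1−r}(x) ≠ 0 and θ_r(x) ≠ 0 for all x ∈ (a,b). Let u be a nontrivial real-valued r-balanced solution of −d(dy/dα) + y dβ = 0 on (a,b) and let s ∈ (a,b). If u(s) = 0, then u changes sign at s. -/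
open Set Filter Function MeasureTheory Topology

noncomputable section

section MonoLimits
variable {f : ℝ → ℝ} {x : ℝ}

lemma rightLim_congr {g : ℝ → ℝ} {L : ℝ} {x : ℝ} (h : ∀ᶠ y in 𝓝[>] x, f y = g y)
    (hg : Tendsto g (𝓝[>] x) (𝓝 L)) : rightLim f x = L :=
  rightLim_eq_of_tendsto (hg.congr' (h.mono fun _ e => e.symm))

lemma leftLim_congr {g : ℝ → ℝ} {L : ℝ} {x : ℝ} (h : ∀ᶠ y in 𝓝[<] x, f y = g y)
    (hg : Tendsto g (𝓝[<] x) (𝓝 L)) : leftLim f x = L :=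
  leftLim_eq_of_tendsto (hg.congr' (h.mono fun _ e => e.symm))

lemma Monotone.tendsto_rightLim_left (hf : Monotone f) (x : ℝ) :
    Tendsto (rightLim f) (𝓝[<] x) (𝓝 (leftLim f x)) := by
  apply tendsto_of_tendsto_of_tendsto_of_le_of_le' (hf.tendsto_leftLim x) tendsto_const_nhds
  · filter_upwards [self_mem_nhdsWithin] with y (hy : y < x) using hf.le_rightLim le_rfl
  · filter_upwards [self_mem_nhdsWithin] with y (hy : y < x) using hf.rightLim_le_leftLim hy

lemma Monotone.tendsto_leftLim_right (hf : Monotone f) (x : ℝ) :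
    Tendsto (leftLim f) (𝓝[>] x) (𝓝 (rightLim f x)) := by
  apply tendsto_of_tendsto_of_tendsto_of_le_of_le' tendsto_const_nhds (hf.tendsto_rightLim x)
  · filter_upwards [self_mem_nhdsWithin] with y (hy : x < y) using hf.rightLim_le_leftLim hy
  · filter_upwards [self_mem_nhdsWithin] with y (hy : x < y) using hf.leftLim_le le_rfl

lemma Monotone.tendsto_leftLim_left (hf : Monotone f) (x : ℝ) :
    Tendsto (leftLim f) (𝓝[<] x) (𝓝 (leftLim f x)) := by
  refine tendsto_order.2 ⟨fun b hb => ?_, fun b hb => ?_⟩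
  · obtain ⟨y₀, hby₀, hy₀x⟩ :=
      (((hf.tendsto_leftLim x).eventually_const_lt hb).and self_mem_nhdsWithin).exists
    filter_upwards [Ioo_mem_nhdsLT hy₀x] with y hy
    exact lt_of_lt_of_le hby₀ (hf.le_leftLim hy.1)
  · filter_upwards [(hf.tendsto_leftLim x).eventually_lt_const hb] with y hy
    exact lt_of_le_of_lt (hf.leftLim_le le_rfl) hy

lemma Monotone.tendsto_rightLim_right (hf : Monotone f) (x : ℝ) :
    Tendsto (rightLim f) (𝓝[>] x) (𝓝 (rightLim f x)) := by
  refine tendsto_order.2 ⟨fun b hb => ?_, fun b hb => ?_⟩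
  · filter_upwards [(hf.tendsto_rightLim x).eventually_const_lt hb] with y hy
    exact lt_of_lt_of_le hy (hf.le_rightLim le_rfl)
  · obtain ⟨y₀, hby₀, hy₀x⟩ :=
      (((hf.tendsto_rightLim x).eventually_lt_const hb).and self_mem_nhdsWithin).exists
    filter_upwards [Ioo_mem_nhdsGT hy₀x] with y hy
    exact lt_of_le_of_lt (hf.rightLim_le hy.2) hby₀

lemma Monotone.rightLim_mono (hf : Monotone f) : Monotone (rightLim f) := by
  intro x y hxy
  rcases eq_or_lt_of_le hxy with rfl | h
  · exact le_rfl
  · exact (hf.rightLim_le (by linarith : x < (x+y)/2)).trans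
      (hf.le_rightLim (by linarith : (x+y)/2 ≤ y))

end MonoLimits


section BVRep

/-- A representation of `f` on `[c,d]` as a difference of globally monotone functions. -/
structure BVRep (f : ℝ → ℝ) (c d : ℝ) : Type where
  p : ℝ → ℝ
  q : ℝ → ℝ
  hp : Monotone p
  hq : Monotone q
  heq : ∀ x ∈ Icc c d, f x = p x - q x

variable {f : ℝ → ℝ} {I : Set ℝ} {c d : ℝ}

lemma clamp_mem (hcd : c ≤ d) (x : ℝ) : max c (min x d) ∈ Icc c d :=
  ⟨le_max_left _ _, max_le hcd (min_le_right _ _)⟩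

lemma clamp_mono : Monotone (fun x : ℝ => max c (min x d)) := fun x y h =>
  max_le_max le_rfl (min_le_min h le_rfl)

lemma clamp_eq {x : ℝ} (hx : x ∈ Icc c d) : max c (min x d) = x := by
  rw [min_eq_left hx.2, max_eq_right hx.1]

noncomputable def BVRep.of_locallyBV (hf : LocallyBoundedVariationOn f I)
    (hcd : c ≤ d) (hsub : Icc c d ⊆ I) : BVRep f c d := by
  choose p q hp hq heq using hf.exists_monotoneOn_sub_monotoneOn
  exact { p := fun x => p (max c (min x d))
          q := fun x => q (max c (min x d))
          hp := fun x y h => hp (hsub (clamp_mem hcd x)) (hsub (clamp_mem hcd y)) (clamp_mono h)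
          hq := fun x y h => hq (hsub (clamp_mem hcd x)) (hsub (clamp_mem hcd y)) (clamp_mono h)
          heq := fun x hx => by simp only [clamp_eq hx]; rw [heq]; rfl }

noncomputable def BVRep.of_monotoneOn (hf : MonotoneOn f I)
    (hcd : c ≤ d) (hsub : Icc c d ⊆ I) : BVRep f c d :=
  { p := fun x => f (max c (min x d))
    q := fun _ => 0
    hp := fun x y h => hf (hsub (clamp_mem hcd x)) (hsub (clamp_mem hcd y)) (clamp_mono h)
    hq := monotone_const
    heq := fun x hx => by simp only [clamp_eq hx]; ring }

namespace BVRep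

lemma ev_left (R : BVRep f c d) {x : ℝ} (hx : c < x) (hx' : x ≤ d) : ∀ᶠ y in 𝓝[<] x, f y = R.p y - R.q y := by
  filter_upwards [Ioo_mem_nhdsLT hx] with y hy
  exact R.heq y ⟨hy.1.le, hy.2.le.trans hx'⟩

lemma ev_right (R : BVRep f c d) {x : ℝ} (hx : c ≤ x) (hx' : x < d) : ∀ᶠ y in 𝓝[>] x, f y = R.p y - R.q y := by
  filter_upwards [Ioo_mem_nhdsGT hx'] with y hy
  exact R.heq y ⟨hx.trans hy.1.le, hy.2.le⟩

lemma tendsto_left (R : BVRep f c d) {x : ℝ} (hx : c < x) (hx' : x ≤ d) :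
    Tendsto f (𝓝[<] x) (𝓝 (leftLim f x)) ∧ leftLim f x = leftLim R.p x - leftLim R.q x := by
  have h : Tendsto (fun y => R.p y - R.q y) (𝓝[<] x) (𝓝 (leftLim R.p x - leftLim R.q x)) :=
    (R.hp.tendsto_leftLim x).sub (R.hq.tendsto_leftLim x)
  have h2 : Tendsto f (𝓝[<] x) (𝓝 (leftLim R.p x - leftLim R.q x)) :=
    h.congr' ((R.ev_left hx hx').mono fun _ e => e.symm)
  have h3 := leftLim_eq_of_tendsto h2
  exact ⟨h3 ▸ h2, h3⟩

lemma tendsto_right (R : BVRep f c d) {x : ℝ} (hx : c ≤ x) (hx' : x < d) :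
    Tendsto f (𝓝[>] x) (𝓝 (rightLim f x)) ∧ rightLim f x = rightLim R.p x - rightLim R.q x := by
  have h : Tendsto (fun y => R.p y - R.q y) (𝓝[>] x) (𝓝 (rightLim R.p x - rightLim R.q x)) :=
    (R.hp.tendsto_rightLim x).sub (R.hq.tendsto_rightLim x)
  have h2 : Tendsto f (𝓝[>] x) (𝓝 (rightLim R.p x - rightLim R.q x)) :=
    h.congr' ((R.ev_right hx hx').mono fun _ e => e.symm)
  have h3 := rightLim_eq_of_tendsto h2
  exact ⟨h3 ▸ h2, h3⟩

/-- The right limits converge, from the left, to the left limit. -/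
lemma tendsto_rightLim_left (R : BVRep f c d) {x : ℝ} (hx : c < x) (hx' : x ≤ d) :
    Tendsto (rightLim f) (𝓝[<] x) (𝓝 (leftLim f x)) := by
  have hev : ∀ᶠ y in 𝓝[<] x, rightLim f y = rightLim R.p y - rightLim R.q y := by
    filter_upwards [Ioo_mem_nhdsLT hx] with y hy
    exact (R.tendsto_right hy.1.le (lt_of_lt_of_le hy.2 hx')).2
  have h : Tendsto (fun y => rightLim R.p y - rightLim R.q y) (𝓝[<] x)
      (𝓝 (leftLim R.p x - leftLim R.q x)) :=
    (R.hp.tendsto_rightLim_left x).sub (R.hq.tendsto_rightLim_left x)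
  rw [(R.tendsto_left hx hx').2]
  exact h.congr' (hev.mono fun _ e => e.symm)

lemma tendsto_leftLim_left (R : BVRep f c d) {x : ℝ} (hx : c < x) (hx' : x ≤ d) :
    Tendsto (leftLim f) (𝓝[<] x) (𝓝 (leftLim f x)) := by
  have hev : ∀ᶠ y in 𝓝[<] x, leftLim f y = leftLim R.p y - leftLim R.q y := by
    filter_upwards [Ioo_mem_nhdsLT hx] with y hy
    exact (R.tendsto_left hy.1 (hy.2.le.trans hx')).2
  have h : Tendsto (fun y => leftLim R.p y - leftLim R.q y) (𝓝[<] x)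
      (𝓝 (leftLim R.p x - leftLim R.q x)) :=
    (R.hp.tendsto_leftLim_left x).sub (R.hq.tendsto_leftLim_left x)
  rw [(R.tendsto_left hx hx').2]
  exact h.congr' (hev.mono fun _ e => e.symm)

lemma tendsto_leftLim_right (R : BVRep f c d) {x : ℝ} (hx : c ≤ x) (hx' : x < d) :
    Tendsto (leftLim f) (𝓝[>] x) (𝓝 (rightLim f x)) := by
  have hev : ∀ᶠ y in 𝓝[>] x, leftLim f y = leftLim R.p y - leftLim R.q y := by
    filter_upwards [Ioo_mem_nhdsGT hx'] with y hy
    exact (R.tendsto_left (lt_of_le_of_lt hx hy.1) hy.2.le).2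
  have h : Tendsto (fun y => leftLim R.p y - leftLim R.q y) (𝓝[>] x)
      (𝓝 (rightLim R.p x - rightLim R.q x)) :=
    (R.hp.tendsto_leftLim_right x).sub (R.hq.tendsto_leftLim_right x)
  rw [(R.tendsto_right hx hx').2]
  exact h.congr' (hev.mono fun _ e => e.symm)

lemma tendsto_rightLim_right (R : BVRep f c d) {x : ℝ} (hx : c ≤ x) (hx' : x < d) :
    Tendsto (rightLim f) (𝓝[>] x) (𝓝 (rightLim f x)) := by
  have hev : ∀ᶠ y in 𝓝[>] x, rightLim f y = rightLim R.p y - rightLim R.q y := by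
    filter_upwards [Ioo_mem_nhdsGT hx'] with y hy
    exact (R.tendsto_right (hx.trans hy.1.le) hy.2).2
  have h : Tendsto (fun y => rightLim R.p y - rightLim R.q y) (𝓝[>] x)
      (𝓝 (rightLim R.p x - rightLim R.q x)) :=
    (R.hp.tendsto_rightLim_right x).sub (R.hq.tendsto_rightLim_right x)
  rw [(R.tendsto_right hx hx').2]
  exact h.congr' (hev.mono fun _ e => e.symm)

/-- A global bound for the values of `f` on `[c,d]`. -/
noncomputable def B (R : BVRep f c d) : ℝ := (|R.p c| + |R.p d|) + (|R.q c| + |R.q d|)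

lemma abs_le_B (R : BVRep f c d) {x : ℝ} (hx : x ∈ Icc c d) : |f x| ≤ R.B := by
  have h1 : |R.p x| ≤ |R.p c| + |R.p d| := by
    have := R.hp hx.1; have := R.hp hx.2
    rcases abs_cases (R.p c) with ⟨h, _⟩ | ⟨h, _⟩ <;>
      rcases abs_cases (R.p d) with ⟨h', _⟩ | ⟨h', _⟩ <;>
      rcases abs_cases (R.p x) with ⟨h'', _⟩ | ⟨h'', _⟩ <;> nlinarith
  have h2 : |R.q x| ≤ |R.q c| + |R.q d| := by
    have := R.hq hx.1; have := R.hq hx.2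
    rcases abs_cases (R.q c) with ⟨h, _⟩ | ⟨h, _⟩ <;>
      rcases abs_cases (R.q d) with ⟨h', _⟩ | ⟨h', _⟩ <;>
      rcases abs_cases (R.q x) with ⟨h'', _⟩ | ⟨h'', _⟩ <;> nlinarith
  calc |f x| = |R.p x - R.q x| := by rw [R.heq x hx]
    _ ≤ |R.p x| + |R.q x| := abs_sub _ _
    _ ≤ R.B := add_le_add h1 h2

lemma integrableOn (R : BVRep f c d) {E : Set ℝ} (hE : MeasurableSet E) (hEsub : E ⊆ Icc c d)
    (μ : Measure ℝ) (hμ : μ E ≠ ⊤) : IntegrableOn f E μ := by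
  have : IsFiniteMeasure (μ.restrict E) :=
    ⟨by rwa [Measure.restrict_apply_univ, lt_top_iff_ne_top]⟩
  have hmeas : AEStronglyMeasurable f (μ.restrict E) := by
    refine ⟨fun x => R.p x - R.q x, (R.hp.measurable.sub R.hq.measurable).stronglyMeasurable, ?_⟩
    filter_upwards [ae_restrict_mem hE] with x hx
    exact R.heq x (hEsub hx)
  refine Integrable.mono' (integrable_const R.B) hmeas ?_
  filter_upwards [ae_restrict_mem hE] with x hx
  simpa [Real.norm_eq_abs] using R.abs_le_B (hEsub hx)

end BVRep
end BVRep

section SMFacts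

noncomputable abbrev jpos (ν : SignedMeasure ℝ) : Measure ℝ := ν.toJordanDecomposition.posPart
noncomputable abbrev jneg (ν : SignedMeasure ℝ) : Measure ℝ := ν.toJordanDecomposition.negPart

lemma nu_eval (ν : SignedMeasure ℝ) {E : Set ℝ} (hE : MeasurableSet E) :
    ν E = (jpos ν E).toReal - (jneg ν E).toReal := by
  conv_lhs => rw [← ν.toSignedMeasure_toJordanDecomposition]
  rw [JordanDecomposition.toSignedMeasure, Measure.toSignedMeasure_sub_apply hE]
  rfl

lemma tendsto_nu_iInter (ν : SignedMeasure ℝ) (E : ℕ → Set ℝ) (hm : ∀ n, MeasurableSet (E n))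
    (hanti : Antitone E) : Tendsto (fun n => ν (E n)) atTop (𝓝 (ν (⋂ n, E n))) := by
  have h1 := tendsto_measure_iInter_atTop (μ := jpos ν)
    (fun n => (hm n).nullMeasurableSet) hanti ⟨0, measure_ne_top _ _⟩
  have h2 := tendsto_measure_iInter_atTop (μ := jneg ν)
    (fun n => (hm n).nullMeasurableSet) hanti ⟨0, measure_ne_top _ _⟩
  have h1' := (ENNReal.tendsto_toReal (measure_ne_top _ _)).comp h1
  have h2' := (ENNReal.tendsto_toReal (measure_ne_top _ _)).comp h2
  rw [nu_eval ν (MeasurableSet.iInter hm)]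
  exact (h1'.sub h2').congr fun n => (nu_eval ν (hm n)).symm

lemma tendsto_nu_iUnion (ν : SignedMeasure ℝ) (E : ℕ → Set ℝ) (hm : ∀ n, MeasurableSet (E n))
    (hmono : Monotone E) : Tendsto (fun n => ν (E n)) atTop (𝓝 (ν (⋃ n, E n))) := by
  have h1 := tendsto_measure_iUnion_atTop (μ := jpos ν) hmono
  have h2 := tendsto_measure_iUnion_atTop (μ := jneg ν) hmono
  have h1' := (ENNReal.tendsto_toReal (measure_ne_top _ _)).comp h1
  have h2' := (ENNReal.tendsto_toReal (measure_ne_top _ _)).comp h2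
  rw [nu_eval ν (MeasurableSet.iUnion hm)]
  exact (h1'.sub h2').congr fun n => (nu_eval ν (hm n)).symm

lemma seq_to_left {c x : ℝ} (h : c < x) :
    ∃ z : ℕ → ℝ, (∀ n, z n ∈ Ioo c x) ∧ Monotone z ∧ Tendsto z atTop (𝓝[<] x) ∧
      ∀ w ∈ Ioo c x, ∃ n, w ≤ z n := by
  have key : ∀ n : ℕ, 0 < (x - c) / ((n:ℝ) + 2) ∧ (x - c) / ((n:ℝ) + 2) < x - c := by
    intro n
    have hn : (0:ℝ) ≤ (n:ℝ) := Nat.cast_nonneg n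
    constructor
    · exact div_pos (by linarith) (by linarith)
    · exact div_lt_self (by linarith) (by linarith)
  refine ⟨fun n => x - (x - c) / (n + 2), fun n => ⟨?_, ?_⟩, fun n m hnm => ?_, ?_, ?_⟩
  · have := (key n).2; show c < x - (x - c) / ((n:ℝ) + 2); linarith
  · have := (key n).1; show x - (x - c) / ((n:ℝ) + 2) < x; linarith
  · have hn : (0:ℝ) ≤ (n:ℝ) := Nat.cast_nonneg n
    show x - (x - c) / ((n:ℝ) + 2) ≤ x - (x - c) / ((m:ℝ) + 2)
    have hc : ((n:ℝ) + 2) ≤ ((m:ℝ) + 2) := by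
      have : (n:ℝ) ≤ (m:ℝ) := Nat.cast_le.2 hnm
      linarith
    have : (x - c) / ((m:ℝ) + 2) ≤ (x - c) / ((n:ℝ) + 2) :=
      div_le_div_of_nonneg_left (by linarith) (by linarith) hc
    linarith
  · have h0 : Tendsto (fun n : ℕ => (x - c) / ((n:ℝ) + 2)) atTop (𝓝 0) :=
      Tendsto.div_atTop tendsto_const_nhds
        (tendsto_atTop_add_const_right atTop 2 tendsto_natCast_atTop_atTop)
    have : Tendsto (fun n : ℕ => x - (x - c) / ((n:ℝ) + 2)) atTop (𝓝 x) := by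
      simpa using tendsto_const_nhds.sub h0
    apply tendsto_nhdsWithin_of_tendsto_nhds_of_eventually_within _ this
    filter_upwards with n
    exact sub_lt_self x (key n).1
  · intro w hw
    have h0 : Tendsto (fun n : ℕ => (x - c) / ((n:ℝ) + 2)) atTop (𝓝 0) :=
      Tendsto.div_atTop tendsto_const_nhds
        (tendsto_atTop_add_const_right atTop 2 tendsto_natCast_atTop_atTop)
    obtain ⟨n, hn⟩ := (h0.eventually_lt_const (by linarith [hw.2] : (0:ℝ) < x - w)).exists
    exact ⟨n, by linarith⟩

lemma val_singleton {ν : SignedMeasure ℝ} {f : ℝ → ℝ} {c d : ℝ}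
    (hrep : SMRepresents ν f c d) (R : BVRep f c d) {x : ℝ} (hx : c < x) (hx' : x ≤ d) :
    ν {x} = rightLim f x - leftLim f x := by
  obtain ⟨z, hz, hmono, htend, _⟩ := seq_to_left hx
  have hIoc : ∀ n, ν (Ioc (z n) x) = rightLim f x - rightLim f (z n) := fun n =>
    hrep (z n) ⟨(hz n).1.le, (hz n).2.le.trans hx'⟩ x ⟨hx.le, hx'⟩ (hz n).2.le
  have htx : Tendsto z atTop (𝓝 x) := htend.mono_right nhdsWithin_le_nhds
  have hset : (⋂ n, Ioc (z n) x) = {x} := by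
    ext w
    simp only [mem_iInter, mem_Ioc, mem_singleton_iff]
    constructor
    · intro hw
      rcases lt_or_ge w x with hlt | hle
      · obtain ⟨n, hn⟩ := (htx.eventually_const_lt hlt).exists
        exact absurd (hw n).1 (by linarith)
      · exact le_antisymm (hw 0).2 hle
    · rintro rfl; exact fun n => ⟨(hz n).2, le_rfl⟩
  have h1 : Tendsto (fun n => ν (Ioc (z n) x)) atTop (𝓝 (ν {x})) := by
    have := tendsto_nu_iInter ν (fun n => Ioc (z n) x) (fun n => measurableSet_Ioc)
      (fun n m hnm => Ioc_subset_Ioc_left (hmono hnm))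
    rwa [hset] at this
  have h2 : Tendsto (fun n => ν (Ioc (z n) x)) atTop (𝓝 (rightLim f x - leftLim f x)) := by
    have := (tendsto_const_nhds (x := rightLim f x)).sub
      ((R.tendsto_rightLim_left hx hx').comp htend)
    exact this.congr fun n => (hIoc n).symm
  exact tendsto_nhds_unique h1 h2

lemma val_Ioo {ν : SignedMeasure ℝ} {f : ℝ → ℝ} {c d : ℝ}
    (hrep : SMRepresents ν f c d) (R : BVRep f c d) {x y : ℝ} (hx : c ≤ x) (hxy : x < y)
    (hy : y ≤ d) : ν (Ioo x y) = leftLim f y - rightLim f x := by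
  obtain ⟨z, hz, hmono, htend, hcov⟩ := seq_to_left hxy
  have hIoc : ∀ n, ν (Ioc x (z n)) = rightLim f (z n) - rightLim f x := fun n =>
    hrep x ⟨hx, hxy.le.trans hy⟩ (z n) ⟨hx.trans (hz n).1.le, (hz n).2.le.trans hy⟩ (hz n).1.le
  have hset : (⋃ n, Ioc x (z n)) = Ioo x y := by
    apply Subset.antisymm
    · exact iUnion_subset fun n => Ioc_subset_Ioo_right (hz n).2
    · intro w hw
      obtain ⟨n, hn⟩ := hcov w hw
      exact mem_iUnion.2 ⟨n, hw.1, hn⟩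
  have h1 : Tendsto (fun n => ν (Ioc x (z n))) atTop (𝓝 (ν (Ioo x y))) := by
    have := tendsto_nu_iUnion ν (fun n => Ioc x (z n)) (fun n => measurableSet_Ioc)
      (fun n m hnm => Ioc_subset_Ioc_right (hmono hnm))
    rwa [hset] at this
  have h2 : Tendsto (fun n => ν (Ioc x (z n))) atTop (𝓝 (leftLim f y - rightLim f x)) := by
    have := ((R.tendsto_rightLim_left (lt_of_le_of_lt hx hxy) hy).comp htend).sub
      (tendsto_const_nhds (x := rightLim f x))
    exact this.congr fun n => (hIoc n).symm
  exact tendsto_nhds_unique h1 h2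

lemma val_Ico {ν : SignedMeasure ℝ} {f : ℝ → ℝ} {c d : ℝ}
    (hrep : SMRepresents ν f c d) (R : BVRep f c d) {x y : ℝ} (hx : c < x) (hxy : x ≤ y)
    (hy : y ≤ d) : ν (Ico x y) = leftLim f y - leftLim f x := by
  rcases eq_or_lt_of_le hxy with rfl | hlt
  · simp
  · have hu : Ico x y = {x} ∪ Ioo x y := by
      rw [← Set.Ioo_insert_left hlt]; rfl
    rw [hu, VectorMeasure.of_union (by simp [Set.disjoint_left]) (measurableSet_singleton x)
      measurableSet_Ioo, val_singleton hrep R hx (hxy.trans hy), val_Ioo hrep R hx.le hlt hy]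
    ring

lemma sInt_abs_le {ν : SignedMeasure ℝ} {h : ℝ → ℝ} {E : Set ℝ} {C : ℝ}
    (hC : ∀ t ∈ E, |h t| ≤ C) (hE : MeasurableSet E) :
    |sInt ν h E| ≤ C * ((jpos ν E).toReal + (jneg ν E).toReal) := by
  have key : ∀ μ : Measure ℝ, IsFiniteMeasure μ → |∫ x in E, h x ∂μ| ≤ C * (μ E).toReal := by
    intro μ hfin
    have : ∀ᵐ x ∂μ.restrict E, ‖h x‖ ≤ C := by
      filter_upwards [ae_restrict_mem hE] with x hx
      simpa [Real.norm_eq_abs] using hC x hx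
    have := norm_integral_le_of_norm_le_const this
    rwa [measureReal_def, Measure.restrict_apply_univ, Real.norm_eq_abs] at this
  have h1 := key (jpos ν) inferInstance
  have h2 := key (jneg ν) inferInstance
  calc |sInt ν h E| ≤ |∫ x in E, h x ∂jpos ν| + |∫ x in E, h x ∂jneg ν| := abs_sub _ _
    _ ≤ C * (jpos ν E).toReal + C * (jneg ν E).toReal := add_le_add h1 h2
    _ = C * ((jpos ν E).toReal + (jneg ν E).toReal) := by ring

lemma sInt_singleton' (ν : SignedMeasure ℝ) (h : ℝ → ℝ) (x : ℝ) :
    sInt ν h {x} = h x * ν {x} := by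
  unfold sInt
  rw [integral_singleton, integral_singleton, nu_eval ν (measurableSet_singleton x)]
  simp [smul_eq_mul]
  simp only [measureReal_def]
  ring

end SMFacts

section AlphaPos

lemma jneg_eq_zero {I : Set ℝ} {α : ℝ → ℝ} (hα : MonotoneOn α I) {c₀ d₀ d₁ : ℝ}
    (hsub : Icc c₀ d₀ ⊆ I) (hcd : c₀ < d₁) (hdd : d₁ < d₀) {να : SignedMeasure ℝ}
    (hrep : SMRepresents να α c₀ d₀) :
    ∀ E ⊆ Ioc c₀ d₁, MeasurableSet E → jneg να E = 0 := by
  set αt : ℝ → ℝ := fun x => α (max c₀ (min x d₀)) with hαt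
  have hd : c₀ ≤ d₀ := by linarith
  have hm : Monotone αt := fun x y h =>
    hα (hsub (clamp_mem hd x)) (hsub (clamp_mem hd y)) (clamp_mono h)
  set F := hm.stieltjesFunction with hF
  have hFeq : ⇑F = rightLim αt := funext fun x => hm.stieltjesFunction_eq x
  have hS1 : ∀ t, c₀ ≤ t → t < d₀ → rightLim αt t = rightLim α t := by
    intro t ht ht'
    refine rightLim_congr ?_ ((BVRep.of_monotoneOn hα hd hsub).tendsto_right ht ht').1
    filter_upwards [Ioo_mem_nhdsGT ht'] with y hy
    rw [hαt]; simp only []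
    rw [clamp_eq ⟨ht.trans hy.1.le, hy.2.le⟩]
  set μα := F.measure with hμα
  set m₁ := (jpos να).restrict (Ioc c₀ d₁) with hm₁
  set m₂ := (jneg να + μα).restrict (Ioc c₀ d₁) with hm₂
  have hRmono : Monotone (rightLim αt) := hm.rightLim_mono
  have key : ∀ x y : ℝ, c₀ ≤ x → x ≤ y → y ≤ d₁ →
      jpos να (Ioc x y) = jneg να (Ioc x y) + μα (Ioc x y) := by
    intro x y hx hxy hy
    have hxd : x ∈ Icc c₀ d₀ := ⟨hx, (hxy.trans hy).trans hdd.le⟩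
    have hyd : y ∈ Icc c₀ d₀ := ⟨hx.trans hxy, hy.trans hdd.le⟩
    have hval : να (Ioc x y) = rightLim α y - rightLim α x := hrep x hxd y hyd hxy
    rw [nu_eval να measurableSet_Ioc] at hval
    have hμval : μα (Ioc x y) = ENNReal.ofReal (rightLim α y - rightLim α x) := by
      rw [hμα, F.measure_Ioc, hFeq, hS1 x hx (lt_of_le_of_lt (hxy.trans hy) hdd),
        hS1 y (hx.trans hxy) (lt_of_le_of_lt hy hdd)]
    have hnn : 0 ≤ rightLim α y - rightLim α x := by
      have := hRmono hxy
      rw [hS1 x hx (lt_of_le_of_lt (hxy.trans hy) hdd),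
        hS1 y (hx.trans hxy) (lt_of_le_of_lt hy hdd)] at this
      linarith
    have h1 : (jpos να (Ioc x y)).toReal
        = (jneg να (Ioc x y)).toReal + (rightLim α y - rightLim α x) := by linarith
    rw [hμval]
    calc jpos να (Ioc x y) = ENNReal.ofReal ((jpos να (Ioc x y)).toReal) :=
          (ENNReal.ofReal_toReal (measure_ne_top _ _)).symm
      _ = ENNReal.ofReal ((jneg να (Ioc x y)).toReal + (rightLim α y - rightLim α x)) := by
          rw [h1]
      _ = ENNReal.ofReal ((jneg να (Ioc x y)).toReal)
            + ENNReal.ofReal (rightLim α y - rightLim α x) :=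
          ENNReal.ofReal_add ENNReal.toReal_nonneg hnn
      _ = jneg να (Ioc x y) + ENNReal.ofReal (rightLim α y - rightLim α x) := by
          rw [ENNReal.ofReal_toReal (measure_ne_top _ _)]
  have hfin2 : IsFiniteMeasure m₂ := by
    constructor
    rw [hm₂, Measure.restrict_apply_univ, Measure.add_apply]
    have h2 : μα (Ioc c₀ d₁) ≠ ⊤ := by
      rw [hμα, F.measure_Ioc]; exact ENNReal.ofReal_ne_top
    exact ENNReal.add_lt_top.2 ⟨(measure_ne_top _ _).lt_top, h2.lt_top⟩
  have hext : m₁ = m₂ := by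
    refine Measure.ext_of_Ioc_finite m₁ m₂ ?_ ?_
    · rw [hm₁, hm₂, Measure.restrict_apply_univ, Measure.restrict_apply_univ,
        Measure.add_apply]
      exact key c₀ d₁ le_rfl hcd.le le_rfl
    · intro a b hab
      rw [hm₁, hm₂, Measure.restrict_apply measurableSet_Ioc,
        Measure.restrict_apply measurableSet_Ioc, Set.Ioc_inter_Ioc]
      rcases le_or_gt (max a c₀) (min b d₁) with hle | hlt
      · rw [Measure.add_apply]
        exact key _ _ (le_max_right _ _) hle (min_le_right _ _)
      · rw [Set.Ioc_eq_empty (not_lt.2 hlt.le)]; simp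
  intro E hEsub hE
  obtain ⟨S, hSm, hS1', hS2'⟩ := να.toJordanDecomposition.mutuallySingular
  have hsplit : jneg να (E ∩ S) + jneg να (E \ S) = jneg να E :=
    measure_inter_add_diff E hSm
  have hd2 : jneg να (E \ S) = 0 :=
    le_antisymm (le_trans (measure_mono fun x hx => hx.2) (le_of_eq hS2')) zero_le
  have hkeyE : jpos να (E ∩ S) = jneg να (E ∩ S) + μα (E ∩ S) := by
    have hmeas : MeasurableSet (E ∩ S) := hE.inter hSm
    have hsub' : E ∩ S ⊆ Ioc c₀ d₁ := fun x hx => hEsub hx.1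
    have h1 : m₁ (E ∩ S) = m₂ (E ∩ S) := by rw [hext]
    rw [hm₁, hm₂, Measure.restrict_apply hmeas, Measure.restrict_apply hmeas,
      inter_eq_self_of_subset_left hsub', Measure.add_apply] at h1
    exact h1
  have hp0 : jpos να (E ∩ S) = 0 :=
    le_antisymm (le_trans (measure_mono fun x hx => hx.2) (le_of_eq hS1')) zero_le
  rw [hp0] at hkeyE
  have hd1 : jneg να (E ∩ S) = 0 := by
    have := hkeyE.symm
    exact (add_eq_zero.1 this).1
  rw [← hsplit, hd1, hd2, add_zero]

lemma sInt_eq_pos {να : SignedMeasure ℝ} {w : ℝ → ℝ} {E : Set ℝ}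
    (hE : MeasurableSet E) (h0 : jneg να E = 0) :
    sInt να w E = ∫ x in E, w x ∂jpos να := by
  unfold sInt
  have : (jneg να).restrict E = 0 := Measure.restrict_eq_zero.2 h0
  rw [this, integral_zero_measure, sub_zero]

lemma sInt_ge {να : SignedMeasure ℝ} {w : ℝ → ℝ} {c₀ d₀ : ℝ} (R : BVRep w c₀ d₀)
    {E : Set ℝ} (hE : MeasurableSet E) (hEsub : E ⊆ Icc c₀ d₀) (h0 : jneg να E = 0)
    {m : ℝ} (hm : ∀ t ∈ E, m ≤ w t) :
    m * (jpos να E).toReal ≤ sInt να w E := by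
  rw [sInt_eq_pos hE h0]
  have := setIntegral_ge_of_const_le (μ := jpos να) hE (measure_ne_top _ _) hm
    (R.integrableOn hE hEsub _ (measure_ne_top _ _))
  rwa [smul_eq_mul, measureReal_def, mul_comm] at this

lemma sInt_le {να : SignedMeasure ℝ} {w : ℝ → ℝ} {c₀ d₀ : ℝ} (R : BVRep w c₀ d₀)
    {E : Set ℝ} (hE : MeasurableSet E) (hEsub : E ⊆ Icc c₀ d₀) (h0 : jneg να E = 0)
    {M : ℝ} (hM : ∀ t ∈ E, w t ≤ M) :
    sInt να w E ≤ M * (jpos να E).toReal := by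
  rw [sInt_eq_pos hE h0]
  have := setIntegral_mono_on (R.integrableOn hE hEsub _ (measure_ne_top _ _))
    (integrableOn_const (μ := jpos να) (s := E) (C := M) (measure_ne_top _ _)) hE hM
  rwa [setIntegral_const, smul_eq_mul, measureReal_def, mul_comm] at this

end AlphaPos

noncomputable section

section Propagation

/-- Context bundling all data of a localized homogeneous solution on `[c₀,d₀]`. -/
structure Ctx (I : Set ℝ) (r : ℝ) (α β u w : ℝ → ℝ) (c₀ d₀ : ℝ) : Type where
  hcd : c₀ < d₀
  hIcc : Icc c₀ d₀ ⊆ I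
  hr0 : 0 ≤ r
  hr1 : r ≤ 1
  hbalu : ∀ x ∈ I, u x = r * leftLim u x + (1 - r) * rightLim u x
  hbalw : ∀ x ∈ I, w x = r * leftLim w x + (1 - r) * rightLim w x
  νu : SignedMeasure ℝ
  να : SignedMeasure ℝ
  νw : SignedMeasure ℝ
  νβ : SignedMeasure ℝ
  hνu : SMRepresents νu u c₀ d₀
  hνα : SMRepresents να α c₀ d₀
  hνw : SMRepresents νw w c₀ d₀
  hνβ : SMRepresents νβ β c₀ d₀
  hequ : ∀ E : Set ℝ, E ⊆ Ioc c₀ d₀ → MeasurableSet E → νu E = sInt να w E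
  heqw : ∀ E : Set ℝ, E ⊆ Ioc c₀ d₀ → MeasurableSet E → νw E = sInt νβ u E
  Ru : BVRep u c₀ d₀
  Rw : BVRep w c₀ d₀
  Rα : BVRep α c₀ d₀
  Rβ : BVRep β c₀ d₀
  hθ1 : ∀ x ∈ Ioo c₀ d₀, 1 - (1 - r) ^ 2 * jump α x * jump β x ≠ 0
  hθ2 : ∀ x ∈ Ioo c₀ d₀, 1 - r ^ 2 * jump α x * jump β x ≠ 0

namespace Ctx

variable {I : Set ℝ} {r : ℝ} {α β u w : ℝ → ℝ} {c₀ d₀ : ℝ}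

/-- The dominating finite measure. -/
noncomputable def rho (C : Ctx I r α β u w c₀ d₀) : Measure ℝ :=
  jpos C.να + jneg C.να + jpos C.νβ + jneg C.νβ

instance (C : Ctx I r α β u w c₀ d₀) : IsFiniteMeasure C.rho := by
  unfold Ctx.rho; infer_instance

lemma rho_mono (C : Ctx I r α β u w c₀ d₀) {E E' : Set ℝ} (h : E ⊆ E') :
    (C.rho E).toReal ≤ (C.rho E').toReal :=
  ENNReal.toReal_mono (measure_ne_top _ _) (measure_mono h)

lemma part_le_rho (C : Ctx I r α β u w c₀ d₀) (ν : SignedMeasure ℝ)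
    (hν : ν = C.να ∨ ν = C.νβ) (E : Set ℝ) :
    (jpos ν E).toReal + (jneg ν E).toReal ≤ (C.rho E).toReal := by
  have h1 : (jpos ν E).toReal + (jneg ν E).toReal = ((jpos ν E) + (jneg ν E)).toReal :=
    (ENNReal.toReal_add (measure_ne_top _ _) (measure_ne_top _ _)).symm
  rw [h1]
  refine ENNReal.toReal_mono (measure_ne_top _ _) ?_
  rcases hν with rfl | rfl <;> simp only [Ctx.rho, Measure.add_apply]
  · exact le_add_right (le_add_right le_rfl)
  · exact add_le_add le_add_self le_rfl

lemma bound_u (C : Ctx I r α β u w c₀ d₀) {E : Set ℝ} (hE : MeasurableSet E)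
    (hEsub : E ⊆ Ioc c₀ d₀) {K : ℝ} (hK : ∀ t ∈ E, |w t| ≤ K) (hK0 : 0 ≤ K) :
    |C.νu E| ≤ K * (C.rho E).toReal := by
  rw [C.hequ E hEsub hE]
  refine le_trans (sInt_abs_le hK hE) ?_
  exact mul_le_mul_of_nonneg_left (C.part_le_rho C.να (Or.inl rfl) E) hK0

lemma bound_w (C : Ctx I r α β u w c₀ d₀) {E : Set ℝ} (hE : MeasurableSet E)
    (hEsub : E ⊆ Ioc c₀ d₀) {K : ℝ} (hK : ∀ t ∈ E, |u t| ≤ K) (hK0 : 0 ≤ K) :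
    |C.νw E| ≤ K * (C.rho E).toReal := by
  rw [C.heqw E hEsub hE]
  refine le_trans (sInt_abs_le hK hE) ?_
  exact mul_le_mul_of_nonneg_left (C.part_le_rho C.νβ (Or.inr rfl) E) hK0

end Ctx
end Propagation
end

noncomputable section
namespace Ctx
open MeasureTheory

variable {I : Set ℝ} {r : ℝ} {α β u w : ℝ → ℝ} {c₀ d₀ : ℝ}

lemma jump_right (C : Ctx I r α β u w c₀ d₀) {s T : ℝ} (hs : c₀ < s) (hT : s < T)
    (hTd : T < d₀) (hvan : ∀ τ ∈ Ioo s T, u τ = 0 ∧ w τ = 0) :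
    u T = 0 ∧ w T = 0 ∧ rightLim u T = 0 ∧ rightLim w T = 0 := by
  have hc₀T : c₀ < T := hs.trans hT
  have hTI : T ∈ I := C.hIcc ⟨hc₀T.le, hTd.le⟩
  have hTsub : {T} ⊆ Ioc c₀ d₀ := by
    intro x hx; rw [mem_singleton_iff] at hx; exact hx ▸ ⟨hc₀T, hTd.le⟩
  have hllu : leftLim u T = 0 := by
    refine leftLim_congr (g := fun _ => (0:ℝ)) ?_ tendsto_const_nhds
    filter_upwards [Ioo_mem_nhdsLT hT] with y hy using (hvan y hy).1
  have hllw : leftLim w T = 0 := by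
    refine leftLim_congr (g := fun _ => (0:ℝ)) ?_ tendsto_const_nhds
    filter_upwards [Ioo_mem_nhdsLT hT] with y hy using (hvan y hy).2
  have hνuT : C.νu {T} = rightLim u T := by
    rw [val_singleton C.hνu C.Ru hc₀T hTd.le, hllu, sub_zero]
  have hνwT : C.νw {T} = rightLim w T := by
    rw [val_singleton C.hνw C.Rw hc₀T hTd.le, hllw, sub_zero]
  have hJa : C.να {T} = jump α T := val_singleton C.hνα C.Rα hc₀T hTd.le
  have hJb : C.νβ {T} = jump β T := val_singleton C.hνβ C.Rβ hc₀T hTd.le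
  have h1 : rightLim u T = w T * jump α T := by
    rw [← hνuT, C.hequ {T} hTsub (measurableSet_singleton T), sInt_singleton', hJa]
  have h2 : rightLim w T = u T * jump β T := by
    rw [← hνwT, C.heqw {T} hTsub (measurableSet_singleton T), sInt_singleton', hJb]
  have hu : u T = (1 - r) * rightLim u T := by
    rw [C.hbalu T hTI, hllu]; ring
  have hw : w T = (1 - r) * rightLim w T := by
    rw [C.hbalw T hTI, hllw]; ring
  have e1 : u T = (1 - r) * (w T * jump α T) := by rw [hu, h1]
  have e2 : w T = (1 - r) * (u T * jump β T) := by rw [hw, h2]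
  have hkey : u T * (1 - (1 - r) ^ 2 * jump α T * jump β T) = 0 := by
    linear_combination e1 + (1 - r) * jump α T * e2
  have hu0 : u T = 0 := by
    rcases mul_eq_zero.1 hkey with h | h
    · exact h
    · exact absurd h (C.hθ1 T ⟨hc₀T, hTd⟩)
  have hw0 : w T = 0 := by rw [e2, hu0]; ring
  exact ⟨hu0, hw0, by rw [h1, hw0]; ring, by rw [h2, hu0]; ring⟩

lemma jump_left (C : Ctx I r α β u w c₀ d₀) {T s : ℝ} (hT : c₀ < T) (hTs : T < s)
    (hs : s ≤ d₀) (hvan : ∀ τ ∈ Ioo T s, u τ = 0 ∧ w τ = 0) :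
    u T = 0 ∧ w T = 0 ∧ leftLim u T = 0 ∧ leftLim w T = 0 := by
  have hTd : T < d₀ := lt_of_lt_of_le hTs hs
  have hTI : T ∈ I := C.hIcc ⟨hT.le, hTd.le⟩
  have hTsub : {T} ⊆ Ioc c₀ d₀ := by
    intro x hx; rw [mem_singleton_iff] at hx; exact hx ▸ ⟨hT, hTd.le⟩
  have hrlu : rightLim u T = 0 := by
    refine rightLim_congr (g := fun _ => (0:ℝ)) ?_ tendsto_const_nhds
    filter_upwards [Ioo_mem_nhdsGT hTs] with y hy using (hvan y hy).1
  have hrlw : rightLim w T = 0 := by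
    refine rightLim_congr (g := fun _ => (0:ℝ)) ?_ tendsto_const_nhds
    filter_upwards [Ioo_mem_nhdsGT hTs] with y hy using (hvan y hy).2
  have hνuT : C.νu {T} = -leftLim u T := by
    rw [val_singleton C.hνu C.Ru hT hTd.le, hrlu, zero_sub]
  have hνwT : C.νw {T} = -leftLim w T := by
    rw [val_singleton C.hνw C.Rw hT hTd.le, hrlw, zero_sub]
  have hJa : C.να {T} = jump α T := val_singleton C.hνα C.Rα hT hTd.le
  have hJb : C.νβ {T} = jump β T := val_singleton C.hνβ C.Rβ hT hTd.le
  have h1 : leftLim u T = -(w T * jump α T) := by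
    have := C.hequ {T} hTsub (measurableSet_singleton T)
    rw [hνuT, sInt_singleton', hJa] at this
    linarith
  have h2 : leftLim w T = -(u T * jump β T) := by
    have := C.heqw {T} hTsub (measurableSet_singleton T)
    rw [hνwT, sInt_singleton', hJb] at this
    linarith
  have hu : u T = r * leftLim u T := by
    rw [C.hbalu T hTI, hrlu]; ring
  have hw : w T = r * leftLim w T := by
    rw [C.hbalw T hTI, hrlw]; ring
  have e1 : u T = -(r * (w T * jump α T)) := by rw [hu, h1]; ring
  have e2 : w T = -(r * (u T * jump β T)) := by rw [hw, h2]; ring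
  have hkey : u T * (1 - r ^ 2 * jump α T * jump β T) = 0 := by
    linear_combination e1 - r * jump α T * e2
  have hu0 : u T = 0 := by
    rcases mul_eq_zero.1 hkey with h | h
    · exact h
    · exact absurd h (C.hθ2 T ⟨hT, hTd⟩)
  have hw0 : w T = 0 := by rw [e2, hu0]; ring
  exact ⟨hu0, hw0, by rw [h1, hw0]; ring, by rw [h2, hu0]; ring⟩

end Ctx
end

noncomputable section

lemma seq_to_right {x d : ℝ} (h : x < d) :
    ∃ z : ℕ → ℝ, (∀ n, z n ∈ Ioo x d) ∧ Antitone z ∧ Tendsto z atTop (𝓝[>] x) := by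
  have key : ∀ n : ℕ, 0 < (d - x) / ((n:ℝ) + 2) ∧ (d - x) / ((n:ℝ) + 2) < d - x := by
    intro n
    have hn : (0:ℝ) ≤ (n:ℝ) := Nat.cast_nonneg n
    exact ⟨div_pos (by linarith) (by linarith), div_lt_self (by linarith) (by linarith)⟩
  refine ⟨fun n => x + (d - x) / (n + 2), fun n => ⟨?_, ?_⟩, fun n m hnm => ?_, ?_⟩
  · have := (key n).1; show x < x + (d - x) / ((n:ℝ) + 2); linarith
  · have := (key n).2; show x + (d - x) / ((n:ℝ) + 2) < d; linarith
  · have hn : (0:ℝ) ≤ (n:ℝ) := Nat.cast_nonneg n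
    show x + (d - x) / ((m:ℝ) + 2) ≤ x + (d - x) / ((n:ℝ) + 2)
    have hc : ((n:ℝ) + 2) ≤ ((m:ℝ) + 2) := by
      have : (n:ℝ) ≤ (m:ℝ) := Nat.cast_le.2 hnm
      linarith
    have : (d - x) / ((m:ℝ) + 2) ≤ (d - x) / ((n:ℝ) + 2) :=
      div_le_div_of_nonneg_left (by linarith) (by linarith) hc
    linarith
  · have h0 : Tendsto (fun n : ℕ => (d - x) / ((n:ℝ) + 2)) atTop (𝓝 0) :=
      Tendsto.div_atTop tendsto_const_nhds
        (tendsto_atTop_add_const_right atTop 2 tendsto_natCast_atTop_atTop)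
    have h1 : Tendsto (fun n : ℕ => x + (d - x) / ((n:ℝ) + 2)) atTop (𝓝 x) := by
      simpa using tendsto_const_nhds.add h0
    apply tendsto_nhdsWithin_of_tendsto_nhds_of_eventually_within _ h1
    filter_upwards with n
    have := (key n).1
    show x < x + (d - x) / ((n:ℝ) + 2); linarith

namespace Ctx
open MeasureTheory

variable {I : Set ℝ} {r : ℝ} {α β u w : ℝ → ℝ} {c₀ d₀ : ℝ}

lemma balance_bound (C : Ctx I r α β u w c₀ d₀) {f : ℝ → ℝ}
    (hbal : ∀ x ∈ I, f x = r * leftLim f x + (1 - r) * rightLim f x)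
    {τ B : ℝ} (hτ : τ ∈ I) (h1 : |leftLim f τ| ≤ B) (h2 : |rightLim f τ| ≤ B) :
    |f τ| ≤ B := by
  rw [hbal τ hτ]
  rcases abs_le.1 h1 with ⟨h1a, h1b⟩
  rcases abs_le.1 h2 with ⟨h2a, h2b⟩
  have hr1' : 0 ≤ 1 - r := by linarith [C.hr1]
  have l1 := mul_le_mul_of_nonneg_left h1b C.hr0
  have l2 := mul_le_mul_of_nonneg_left h1a C.hr0
  have l3 := mul_le_mul_of_nonneg_left h2b hr1'
  have l4 := mul_le_mul_of_nonneg_left h2a hr1'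
  rw [abs_le]
  constructor <;> nlinarith

/-- Extension to the right: if the right limits of `u, w` vanish at `T`, then `u, w`
vanish identically on some interval `(T, t']`. -/
lemma ext_right (C : Ctx I r α β u w c₀ d₀) {T d₁ : ℝ} (hT : c₀ < T) (hTd : T < d₁)
    (hd₁ : d₁ < d₀) (h0u : rightLim u T = 0) (h0w : rightLim w T = 0) :
    ∃ t' ∈ Ioc T d₁, ∀ τ ∈ Ioc T t', u τ = 0 ∧ w τ = 0 := by
  obtain ⟨z, hz, hanti, htend⟩ := seq_to_right hTd
  have htendn : Tendsto z atTop (𝓝 T) := htend.mono_right nhdsWithin_le_nhds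
  -- the intersection of the Ioc's is empty
  have hiInter : (⋂ n, Ioc T (z n)) = (∅ : Set ℝ) := by
    ext x
    simp only [mem_iInter, mem_Ioc, mem_empty_iff_false, iff_false, not_forall]
    by_contra hcon
    push_neg at hcon
    have hxT : T < x := (hcon 0).1
    have : x ≤ T := ge_of_tendsto htendn (Eventually.of_forall fun n => (hcon n).2)
    linarith
  have hlim : Tendsto (fun n => (C.rho (Ioc T (z n))).toReal) atTop (𝓝 0) := by
    have h1 := tendsto_measure_iInter_atTop (μ := C.rho) (s := fun n => Ioc T (z n))
      (fun n => measurableSet_Ioc.nullMeasurableSet)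
      (fun n m hnm => Ioc_subset_Ioc_right (hanti hnm)) ⟨0, measure_ne_top _ _⟩
    rw [hiInter] at h1
    have h2 := (ENNReal.tendsto_toReal (by simp : (C.rho (∅ : Set ℝ)) ≠ ⊤)).comp h1
    simpa [Function.comp_def] using h2
  obtain ⟨n, hn⟩ := (hlim.eventually_lt_const (by norm_num : (0:ℝ) < 1/2)).exists
  set t' := z n with ht'
  have hts : T < t' := (hz n).1
  have ht'd : t' ≤ d₁ := (hz n).2.le
  have hsmall : (C.rho (Ioc T t')).toReal ≤ 1/2 := hn.le
  -- the sup of values on (T, t']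
  set V := (fun τ => max |u τ| |w τ|) '' Ioc T t' with hV
  have hVne : V.Nonempty := ⟨_, mem_image_of_mem _ (right_mem_Ioc.2 hts)⟩
  have hsubIcc : Ioc T t' ⊆ Icc c₀ d₀ := fun x hx =>
    ⟨hT.le.trans hx.1.le, (hx.2.trans (ht'd.trans hd₁.le))⟩
  have hsubIoc : Ioc T t' ⊆ Ioc c₀ d₀ := fun x hx =>
    ⟨hT.trans hx.1, hx.2.trans (ht'd.trans hd₁.le)⟩
  have hVbdd : BddAbove V := by
    refine ⟨max C.Ru.B C.Rw.B, ?_⟩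
    rintro v ⟨τ, hτ, rfl⟩
    exact max_le_max (C.Ru.abs_le_B (hsubIcc hτ)) (C.Rw.abs_le_B (hsubIcc hτ))
  set K := sSup V with hK
  have hKb : ∀ τ ∈ Ioc T t', |u τ| ≤ K ∧ |w τ| ≤ K := fun τ hτ =>
    ⟨le_trans (le_max_left _ _) (le_csSup hVbdd (mem_image_of_mem _ hτ)),
     le_trans (le_max_right _ _) (le_csSup hVbdd (mem_image_of_mem _ hτ))⟩
  have hK0 : 0 ≤ K :=
    le_trans (abs_nonneg _) (hKb t' (right_mem_Ioc.2 hts)).1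
  have hTc : T ∈ Icc c₀ d₀ := ⟨hT.le, (hTd.trans hd₁).le⟩
  -- right limits are small
  have hrlu : ∀ τ ∈ Ioc T t', |rightLim u τ| ≤ K / 2 := by
    intro τ hτ
    have hτc : τ ∈ Icc c₀ d₀ := hsubIcc hτ
    have hval : C.νu (Ioc T τ) = rightLim u τ := by
      rw [C.hνu T hTc τ hτc hτ.1.le, h0u, sub_zero]
    have hb := C.bound_u measurableSet_Ioc (fun x hx => hsubIoc ⟨hx.1, hx.2.trans hτ.2⟩)
      (fun t ht => (hKb t ⟨ht.1, ht.2.trans hτ.2⟩).2) hK0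
    rw [hval] at hb
    calc |rightLim u τ| ≤ K * (C.rho (Ioc T τ)).toReal := hb
      _ ≤ K * (C.rho (Ioc T t')).toReal :=
          mul_le_mul_of_nonneg_left (C.rho_mono (Ioc_subset_Ioc_right hτ.2)) hK0
      _ ≤ K * (1/2) := mul_le_mul_of_nonneg_left hsmall hK0
      _ = K / 2 := by ring
  have hrlw : ∀ τ ∈ Ioc T t', |rightLim w τ| ≤ K / 2 := by
    intro τ hτ
    have hτc : τ ∈ Icc c₀ d₀ := hsubIcc hτ
    have hval : C.νw (Ioc T τ) = rightLim w τ := by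
      rw [C.hνw T hTc τ hτc hτ.1.le, h0w, sub_zero]
    have hb := C.bound_w measurableSet_Ioc (fun x hx => hsubIoc ⟨hx.1, hx.2.trans hτ.2⟩)
      (fun t ht => (hKb t ⟨ht.1, ht.2.trans hτ.2⟩).1) hK0
    rw [hval] at hb
    calc |rightLim w τ| ≤ K * (C.rho (Ioc T τ)).toReal := hb
      _ ≤ K * (C.rho (Ioc T t')).toReal :=
          mul_le_mul_of_nonneg_left (C.rho_mono (Ioc_subset_Ioc_right hτ.2)) hK0
      _ ≤ K * (1/2) := mul_le_mul_of_nonneg_left hsmall hK0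
      _ = K / 2 := by ring
  -- left limits are small
  have hllu : ∀ τ ∈ Ioc T t', |leftLim u τ| ≤ K / 2 := by
    intro τ hτ
    have htd : Tendsto (rightLim u) (𝓝[<] τ) (𝓝 (leftLim u τ)) :=
      C.Ru.tendsto_rightLim_left (hT.trans hτ.1) ((hτ.2.trans ht'd).trans hd₁.le)
    refine le_of_tendsto htd.abs ?_
    filter_upwards [Ioo_mem_nhdsLT hτ.1] with y hy
    exact hrlu y ⟨hy.1, hy.2.le.trans hτ.2⟩
  have hllw : ∀ τ ∈ Ioc T t', |leftLim w τ| ≤ K / 2 := by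
    intro τ hτ
    have htd : Tendsto (rightLim w) (𝓝[<] τ) (𝓝 (leftLim w τ)) :=
      C.Rw.tendsto_rightLim_left (hT.trans hτ.1) ((hτ.2.trans ht'd).trans hd₁.le)
    refine le_of_tendsto htd.abs ?_
    filter_upwards [Ioo_mem_nhdsLT hτ.1] with y hy
    exact hrlw y ⟨hy.1, hy.2.le.trans hτ.2⟩
  -- values are small, so K ≤ K/2 hence K = 0
  have hval : ∀ v ∈ V, v ≤ K / 2 := by
    rintro v ⟨τ, hτ, rfl⟩
    have hτI : τ ∈ I := C.hIcc (hsubIcc hτ)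
    exact max_le (C.balance_bound C.hbalu hτI (hllu τ hτ) (hrlu τ hτ))
      (C.balance_bound C.hbalw hτI (hllw τ hτ) (hrlw τ hτ))
  have hK2 : K ≤ K / 2 := csSup_le hVne hval
  have hK00 : K = 0 := by linarith
  refine ⟨t', ⟨hts, ht'd⟩, fun τ hτ => ?_⟩
  exact ⟨abs_eq_zero.1 (le_antisymm ((hKb τ hτ).1.trans hK00.le) (abs_nonneg _)),
    abs_eq_zero.1 (le_antisymm ((hKb τ hτ).2.trans hK00.le) (abs_nonneg _))⟩

end Ctx
end

noncomputable section
namespace Ctx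
open MeasureTheory

variable {I : Set ℝ} {r : ℝ} {α β u w : ℝ → ℝ} {c₀ d₀ : ℝ}

/-- Extension to the left: if the left limits of `u, w` vanish at `T`, then `u, w`
vanish identically on some interval `[t', T)`. -/
lemma ext_left (C : Ctx I r α β u w c₀ d₀) {c₁ T : ℝ} (hc₁ : c₀ < c₁) (hcT : c₁ < T)
    (hTd : T ≤ d₀) (h0u : leftLim u T = 0) (h0w : leftLim w T = 0) :
    ∃ t' ∈ Ico c₁ T, ∀ τ ∈ Ico t' T, u τ = 0 ∧ w τ = 0 := by
  obtain ⟨z, hz, hmono, htend, _⟩ := seq_to_left hcT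
  have htendn : Tendsto z atTop (𝓝 T) := htend.mono_right nhdsWithin_le_nhds
  have hiInter : (⋂ n, Ico (z n) T) = (∅ : Set ℝ) := by
    ext x
    simp only [mem_iInter, mem_Ico, mem_empty_iff_false, iff_false, not_forall]
    by_contra hcon
    push_neg at hcon
    have hxT : x < T := (hcon 0).2
    have : T ≤ x := le_of_tendsto htendn (Eventually.of_forall fun n => (hcon n).1)
    linarith
  have hlim : Tendsto (fun n => (C.rho (Ico (z n) T)).toReal) atTop (𝓝 0) := by
    have h1 := tendsto_measure_iInter_atTop (μ := C.rho) (s := fun n => Ico (z n) T)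
      (fun n => measurableSet_Ico.nullMeasurableSet)
      (fun n m hnm => Ico_subset_Ico_left (hmono hnm)) ⟨0, measure_ne_top _ _⟩
    rw [hiInter] at h1
    have h2 := (ENNReal.tendsto_toReal (by simp : (C.rho (∅ : Set ℝ)) ≠ ⊤)).comp h1
    simpa [Function.comp_def] using h2
  obtain ⟨n, hn⟩ := (hlim.eventually_lt_const (by norm_num : (0:ℝ) < 1/2)).exists
  set t' := z n with ht'
  have hct : c₁ ≤ t' := (hz n).1.le
  have htT : t' < T := (hz n).2
  have hsmall : (C.rho (Ico t' T)).toReal ≤ 1/2 := hn.le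
  set V := (fun τ => max |u τ| |w τ|) '' Ico t' T with hV
  have hVne : V.Nonempty := ⟨_, mem_image_of_mem _ (left_mem_Ico.2 htT)⟩
  have hsubIcc : Ico t' T ⊆ Icc c₀ d₀ := fun x hx =>
    ⟨hc₁.le.trans (hct.trans hx.1), hx.2.le.trans hTd⟩
  have hsubIoc : Ico t' T ⊆ Ioc c₀ d₀ := fun x hx =>
    ⟨hc₁.trans_le (hct.trans hx.1), hx.2.le.trans hTd⟩
  have hVbdd : BddAbove V := by
    refine ⟨max C.Ru.B C.Rw.B, ?_⟩
    rintro v ⟨τ, hτ, rfl⟩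
    exact max_le_max (C.Ru.abs_le_B (hsubIcc hτ)) (C.Rw.abs_le_B (hsubIcc hτ))
  set K := sSup V with hK
  have hKb : ∀ τ ∈ Ico t' T, |u τ| ≤ K ∧ |w τ| ≤ K := fun τ hτ =>
    ⟨le_trans (le_max_left _ _) (le_csSup hVbdd (mem_image_of_mem _ hτ)),
     le_trans (le_max_right _ _) (le_csSup hVbdd (mem_image_of_mem _ hτ))⟩
  have hK0 : 0 ≤ K :=
    le_trans (abs_nonneg _) (hKb t' (left_mem_Ico.2 htT)).1
  have hllu : ∀ τ ∈ Ico t' T, |leftLim u τ| ≤ K / 2 := by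
    intro τ hτ
    have hval : C.νu (Ico τ T) = -leftLim u τ := by
      rw [val_Ico C.hνu C.Ru (hc₁.trans_le (hct.trans hτ.1)) hτ.2.le hTd, h0u, zero_sub]
    have hb := C.bound_u measurableSet_Ico
      (fun x hx => hsubIoc (Ico_subset_Ico_left hτ.1 hx))
      (fun t ht => (hKb t (Ico_subset_Ico_left hτ.1 ht)).2) hK0
    rw [hval, abs_neg] at hb
    calc |leftLim u τ| ≤ K * (C.rho (Ico τ T)).toReal := hb
      _ ≤ K * (C.rho (Ico t' T)).toReal :=
          mul_le_mul_of_nonneg_left (C.rho_mono (Ico_subset_Ico_left hτ.1)) hK0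
      _ ≤ K * (1/2) := mul_le_mul_of_nonneg_left hsmall hK0
      _ = K / 2 := by ring
  have hllw : ∀ τ ∈ Ico t' T, |leftLim w τ| ≤ K / 2 := by
    intro τ hτ
    have hval : C.νw (Ico τ T) = -leftLim w τ := by
      rw [val_Ico C.hνw C.Rw (hc₁.trans_le (hct.trans hτ.1)) hτ.2.le hTd, h0w, zero_sub]
    have hb := C.bound_w measurableSet_Ico
      (fun x hx => hsubIoc (Ico_subset_Ico_left hτ.1 hx))
      (fun t ht => (hKb t (Ico_subset_Ico_left hτ.1 ht)).1) hK0
    rw [hval, abs_neg] at hb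
    calc |leftLim w τ| ≤ K * (C.rho (Ico τ T)).toReal := hb
      _ ≤ K * (C.rho (Ico t' T)).toReal :=
          mul_le_mul_of_nonneg_left (C.rho_mono (Ico_subset_Ico_left hτ.1)) hK0
      _ ≤ K * (1/2) := mul_le_mul_of_nonneg_left hsmall hK0
      _ = K / 2 := by ring
  have hrlu : ∀ τ ∈ Ico t' T, |rightLim u τ| ≤ K / 2 := by
    intro τ hτ
    have hIooSub : Ioo τ T ⊆ Ico t' T := fun x hx => ⟨hτ.1.trans hx.1.le, hx.2⟩
    have hval : C.νu (Ioo τ T) = -rightLim u τ := by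
      rw [val_Ioo C.hνu C.Ru (hc₁.le.trans (hct.trans hτ.1)) hτ.2 hTd, h0u, zero_sub]
    have hb := C.bound_u measurableSet_Ioo (fun x hx => hsubIoc (hIooSub hx))
      (fun t ht => (hKb t (hIooSub ht)).2) hK0
    rw [hval, abs_neg] at hb
    calc |rightLim u τ| ≤ K * (C.rho (Ioo τ T)).toReal := hb
      _ ≤ K * (C.rho (Ico t' T)).toReal :=
          mul_le_mul_of_nonneg_left (C.rho_mono hIooSub) hK0
      _ ≤ K * (1/2) := mul_le_mul_of_nonneg_left hsmall hK0
      _ = K / 2 := by ring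
  have hrlw : ∀ τ ∈ Ico t' T, |rightLim w τ| ≤ K / 2 := by
    intro τ hτ
    have hIooSub : Ioo τ T ⊆ Ico t' T := fun x hx => ⟨hτ.1.trans hx.1.le, hx.2⟩
    have hval : C.νw (Ioo τ T) = -rightLim w τ := by
      rw [val_Ioo C.hνw C.Rw (hc₁.le.trans (hct.trans hτ.1)) hτ.2 hTd, h0w, zero_sub]
    have hb := C.bound_w measurableSet_Ioo (fun x hx => hsubIoc (hIooSub hx))
      (fun t ht => (hKb t (hIooSub ht)).1) hK0
    rw [hval, abs_neg] at hb
    calc |rightLim w τ| ≤ K * (C.rho (Ioo τ T)).toReal := hb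
      _ ≤ K * (C.rho (Ico t' T)).toReal :=
          mul_le_mul_of_nonneg_left (C.rho_mono hIooSub) hK0
      _ ≤ K * (1/2) := mul_le_mul_of_nonneg_left hsmall hK0
      _ = K / 2 := by ring
  have hval : ∀ v ∈ V, v ≤ K / 2 := by
    rintro v ⟨τ, hτ, rfl⟩
    have hτI : τ ∈ I := C.hIcc (hsubIcc hτ)
    exact max_le (C.balance_bound C.hbalu hτI (hllu τ hτ) (hrlu τ hτ))
      (C.balance_bound C.hbalw hτI (hllw τ hτ) (hrlw τ hτ))
  have hK2 : K ≤ K / 2 := csSup_le hVne hval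
  have hK00 : K = 0 := by linarith
  refine ⟨t', ⟨hct, htT⟩, fun τ hτ => ?_⟩
  exact ⟨abs_eq_zero.1 (le_antisymm ((hKb τ hτ).1.trans hK00.le) (abs_nonneg _)),
    abs_eq_zero.1 (le_antisymm ((hKb τ hτ).2.trans hK00.le) (abs_nonneg _))⟩

/-- Propagation of vanishing data to the right. -/
lemma prop_right (C : Ctx I r α β u w c₀ d₀) {s d₁ : ℝ} (hs : c₀ < s) (hsd : s ≤ d₁)
    (hd₁ : d₁ < d₀) (h0u : rightLim u s = 0) (h0w : rightLim w s = 0) :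
    ∀ τ ∈ Ioc s d₁, u τ = 0 ∧ w τ = 0 := by
  set G := {t ∈ Icc s d₁ | ∀ τ ∈ Ioc s t, u τ = 0 ∧ w τ = 0} with hG
  have hsG : s ∈ G := ⟨⟨le_rfl, hsd⟩, fun τ hτ => absurd hτ (by simp)⟩
  have hGne : G.Nonempty := ⟨s, hsG⟩
  have hGb : BddAbove G := (bddAbove_Icc (a := s) (b := d₁)).mono fun t ht => ht.1
  set T := sSup G with hT
  have hTmem : T ∈ Icc s d₁ := ⟨le_csSup hGb hsG, csSup_le hGne fun t ht => ht.1.2⟩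
  have hvanT : ∀ τ ∈ Ioc s T, u τ = 0 ∧ w τ = 0 := by
    have hint : ∀ τ ∈ Ioo s T, u τ = 0 ∧ w τ = 0 := by
      intro τ hτ
      obtain ⟨t, htG, hτt⟩ := exists_lt_of_lt_csSup hGne hτ.2
      exact htG.2 τ ⟨hτ.1, hτt.le⟩
    intro τ hτ
    rcases eq_or_lt_of_le hτ.2 with heq | hlt
    · have := C.jump_right hs (heq ▸ hτ.1) (lt_of_le_of_lt (heq ▸ hTmem.2) hd₁)
        (fun σ hσ => hint σ (heq ▸ hσ))
      exact ⟨heq ▸ this.1, heq ▸ this.2.1⟩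
    · exact hint τ ⟨hτ.1, hlt⟩
  have hrlT : rightLim u T = 0 ∧ rightLim w T = 0 := by
    rcases eq_or_lt_of_le hTmem.1 with heq | hsT
    · exact ⟨heq ▸ h0u, heq ▸ h0w⟩
    · have := C.jump_right hs hsT (lt_of_le_of_lt hTmem.2 hd₁)
        (fun σ hσ => hvanT σ ⟨hσ.1, hσ.2.le⟩)
      exact ⟨this.2.2.1, this.2.2.2⟩
  rcases eq_or_lt_of_le hTmem.2 with heq | hTd
  · intro τ hτ; exact hvanT τ ⟨hτ.1, hτ.2.trans heq.ge⟩
  · exfalso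
    obtain ⟨t', ht', hvant'⟩ := C.ext_right (hs.trans_le hTmem.1) hTd hd₁ hrlT.1 hrlT.2
    have ht'G : t' ∈ G := by
      refine ⟨⟨hTmem.1.trans ht'.1.le, ht'.2⟩, fun τ hτ => ?_⟩
      rcases le_or_gt τ T with h | h
      · exact hvanT τ ⟨hτ.1, h⟩
      · exact hvant' τ ⟨h, hτ.2⟩
    exact absurd (le_csSup hGb ht'G) (not_le.2 ht'.1)

/-- Propagation of vanishing data to the left. -/
lemma prop_left (C : Ctx I r α β u w c₀ d₀) {c₁ s : ℝ} (hc₁ : c₀ < c₁) (hcs : c₁ ≤ s)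
    (hs : s ≤ d₀) (h0u : leftLim u s = 0) (h0w : leftLim w s = 0) :
    ∀ τ ∈ Ico c₁ s, u τ = 0 ∧ w τ = 0 := by
  set G := {t ∈ Icc c₁ s | ∀ τ ∈ Ico t s, u τ = 0 ∧ w τ = 0} with hG
  have hsG : s ∈ G := ⟨⟨hcs, le_rfl⟩, fun τ hτ => absurd hτ (by simp)⟩
  have hGne : G.Nonempty := ⟨s, hsG⟩
  have hGb : BddBelow G := (bddBelow_Icc (a := s) (b := c₁)).mono fun t ht => ht.1
  set T := sInf G with hT
  have hTmem : T ∈ Icc c₁ s := ⟨le_csInf hGne fun t ht => ht.1.1, csInf_le hGb hsG⟩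
  have hvanT : ∀ τ ∈ Ico T s, u τ = 0 ∧ w τ = 0 := by
    have hint : ∀ τ ∈ Ioo T s, u τ = 0 ∧ w τ = 0 := by
      intro τ hτ
      obtain ⟨t, htG, hτt⟩ := exists_lt_of_csInf_lt hGne hτ.1
      exact htG.2 τ ⟨hτt.le, hτ.2⟩
    intro τ hτ
    rcases eq_or_lt_of_le hτ.1 with heq | hlt
    · have := C.jump_left (hc₁.trans_le (heq ▸ hTmem.1)) (heq ▸ hτ.2) hs
        (fun σ hσ => hint σ (heq ▸ hσ))
      exact ⟨heq ▸ this.1, heq ▸ this.2.1⟩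
    · exact hint τ ⟨hlt, hτ.2⟩
  have hllT : leftLim u T = 0 ∧ leftLim w T = 0 := by
    rcases eq_or_lt_of_le hTmem.2 with heq | hTs
    · exact ⟨heq ▸ h0u, heq ▸ h0w⟩
    · have := C.jump_left (hc₁.trans_le hTmem.1) hTs hs
        (fun σ hσ => hvanT σ ⟨hσ.1.le, hσ.2⟩)
      exact ⟨this.2.2.1, this.2.2.2⟩
  rcases eq_or_lt_of_le hTmem.1 with heq | hcT
  · intro τ hτ; exact hvanT τ ⟨heq.ge.trans hτ.1, hτ.2⟩
  · exfalso
    obtain ⟨t', ht', hvant'⟩ := C.ext_left hc₁ hcT (hTmem.2.trans hs) hllT.1 hllT.2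
    have ht'G : t' ∈ G := by
      refine ⟨⟨ht'.1, ht'.2.le.trans hTmem.2⟩, fun τ hτ => ?_⟩
      rcases lt_or_ge τ T with h | h
      · exact hvant' τ ⟨hτ.1, h⟩
      · exact hvanT τ ⟨h, hτ.2⟩
    exact absurd (csInf_le hGb ht'G) (not_le.2 ht'.2)

end Ctx
end

noncomputable section
section Strict

variable {I : Set ℝ} {α : ℝ → ℝ} {c₀ d₀ : ℝ}

lemma clamp_rightLim_eq (hα : MonotoneOn α I) (hcd : c₀ ≤ d₀) (hsub : Icc c₀ d₀ ⊆ I)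
    {t : ℝ} (ht : c₀ ≤ t) (ht' : t < d₀) :
    rightLim α t = rightLim (fun y => α (max c₀ (min y d₀))) t := by
  have hm : Monotone (fun y => α (max c₀ (min y d₀))) := fun x y h =>
    hα (hsub (clamp_mem hcd x)) (hsub (clamp_mem hcd y)) (clamp_mono h)
  refine rightLim_congr ?_ (hm.tendsto_rightLim t)
  filter_upwards [Ioo_mem_nhdsGT ht'] with y hy
  rw [clamp_eq ⟨ht.trans hy.1.le, hy.2.le⟩]

lemma clamp_leftLim_eq (hα : MonotoneOn α I) (hcd : c₀ ≤ d₀) (hsub : Icc c₀ d₀ ⊆ I)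
    {t : ℝ} (ht : c₀ < t) (ht' : t ≤ d₀) :
    leftLim α t = leftLim (fun y => α (max c₀ (min y d₀))) t := by
  have hm : Monotone (fun y => α (max c₀ (min y d₀))) := fun x y h =>
    hα (hsub (clamp_mem hcd x)) (hsub (clamp_mem hcd y)) (clamp_mono h)
  refine leftLim_congr ?_ (hm.tendsto_leftLim t)
  filter_upwards [Ioo_mem_nhdsLT ht] with y hy
  rw [clamp_eq ⟨hy.1.le, hy.2.le.trans ht'⟩]

lemma rightLim_strict (hα : StrictMonoOn α I) (hsub : Icc c₀ d₀ ⊆ I)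
    {s x : ℝ} (hs : c₀ ≤ s) (hsx : s < x) (hx : x < d₀) :
    rightLim α s < rightLim α x := by
  have hcd : c₀ ≤ d₀ := hs.trans (hsx.le.trans hx.le)
  have hmono := hα.monotoneOn
  have hm : Monotone (fun y => α (max c₀ (min y d₀))) := fun p q h =>
    hmono (hsub (clamp_mem hcd p)) (hsub (clamp_mem hcd q)) (clamp_mono h)
  set t₁ := s + (x - s) / 3 with ht₁
  set t₂ := s + 2 * (x - s) / 3 with ht₂
  have h1 : s < t₁ := by rw [ht₁]; linarith
  have h2 : t₁ < t₂ := by rw [ht₁, ht₂]; linarith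
  have h3 : t₂ < x := by rw [ht₂]; linarith
  have ht₁m : t₁ ∈ Icc c₀ d₀ := ⟨hs.trans h1.le, ((h2.trans h3).trans hx).le⟩
  have ht₂m : t₂ ∈ Icc c₀ d₀ := ⟨hs.trans (h1.trans h2).le, (h3.trans hx).le⟩
  rw [clamp_rightLim_eq hmono hcd hsub hs ((hsx.trans hx)),
    clamp_rightLim_eq hmono hcd hsub (hs.trans hsx.le) hx]
  calc rightLim (fun y => α (max c₀ (min y d₀))) s
      ≤ α (max c₀ (min t₁ d₀)) := hm.rightLim_le h1
    _ = α t₁ := by rw [clamp_eq ht₁m]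
    _ < α t₂ := hα (hsub ht₁m) (hsub ht₂m) h2
    _ = α (max c₀ (min t₂ d₀)) := by rw [clamp_eq ht₂m]
    _ ≤ rightLim (fun y => α (max c₀ (min y d₀))) x := hm.le_rightLim h3.le
      
lemma leftLim_strict (hα : StrictMonoOn α I) (hsub : Icc c₀ d₀ ⊆ I)
    {x s : ℝ} (hx : c₀ < x) (hxs : x < s) (hs : s ≤ d₀) :
    leftLim α x < leftLim α s := by
  have hcd : c₀ ≤ d₀ := (hx.trans (hxs.trans_le hs)).le
  have hmono := hα.monotoneOn
  have hm : Monotone (fun y => α (max c₀ (min y d₀))) := fun p q h =>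
    hmono (hsub (clamp_mem hcd p)) (hsub (clamp_mem hcd q)) (clamp_mono h)
  set t := (x + s) / 2 with hts
  have h1 : x < t := by rw [hts]; linarith
  have h2 : t < s := by rw [hts]; linarith
  have hxm : x ∈ Icc c₀ d₀ := ⟨hx.le, (hxs.trans_le hs).le⟩
  have htm : t ∈ Icc c₀ d₀ := ⟨hx.le.trans h1.le, (h2.trans_le hs).le⟩
  rw [clamp_leftLim_eq hmono hcd hsub hx (hxs.le.trans hs),
    clamp_leftLim_eq hmono hcd hsub (hx.trans hxs) hs]
  calc leftLim (fun y => α (max c₀ (min y d₀))) x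
      ≤ α (max c₀ (min x d₀)) := hm.leftLim_le le_rfl
    _ = α x := by rw [clamp_eq hxm]
    _ < α t := hα (hsub hxm) (hsub htm) h1
    _ = α (max c₀ (min t d₀)) := by rw [clamp_eq htm]
    _ ≤ leftLim (fun y => α (max c₀ (min y d₀))) s := hm.le_leftLim h2

lemma jump_nonneg (hα : MonotoneOn α I) (hsub : Icc c₀ d₀ ⊆ I)
    {s : ℝ} (hs : c₀ < s) (hs' : s < d₀) : 0 ≤ jump α s := by
  have hcd : c₀ ≤ d₀ := (hs.trans hs').le
  have hm : Monotone (fun y => α (max c₀ (min y d₀))) := fun p q h =>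
    hα (hsub (clamp_mem hcd p)) (hsub (clamp_mem hcd q)) (clamp_mono h)
  have := hm.leftLim_le_rightLim (le_refl s)
  rw [← clamp_leftLim_eq hα hcd hsub hs hs'.le,
    ← clamp_rightLim_eq hα hcd hsub hs.le hs'] at this
  unfold jump
  linarith

end Strict
end

set_option maxHeartbeats 1000000

/-- Theorem 4.7: if `u` is a nontrivial real-valued `r`-balanced solution of
`-d(dy/dα) + y dβ = 0` and `u(s) = 0` for some `s ∈ (a,b)`, then `u` changes sign at `s`. -/
theorem statement7 (a b : EReal) (hab : a < b) (r : ℝ) (hr : r ∈ Icc (0 : ℝ) 1)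
    (α β : ℝ → ℝ) (hα : StrictMonoOn α (EI a b))
    (hβ : LocallyBoundedVariationOn β (EI a b))
    (hθ : ∀ x ∈ EI a b, theta α β (1 - r) x ≠ 0 ∧ theta α β r x ≠ 0)
    (u w : ℝ → ℝ) (hsol : IsHomSol (EI a b) r α β u w)
    (hnt : ¬ ∀ x ∈ EI a b, u x = 0)
    (s : ℝ) (hs : s ∈ EI a b) (hus : u s = 0) :
    ChangesSignAt (EI a b) u s := by
  classical
  push_neg at hnt
  obtain ⟨x₀, hx₀I, hx₀⟩ := hnt
  have hconv : ∀ {p q : ℝ}, p ∈ EI a b → q ∈ EI a b → Icc p q ⊆ EI a b := by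
    intro p q hp hq z hz
    exact ⟨lt_of_lt_of_le hp.1 (EReal.coe_le_coe_iff.2 hz.1),
      lt_of_le_of_lt (EReal.coe_le_coe_iff.2 hz.2) hq.2⟩
  have hmI : min s x₀ ∈ EI a b := by
    rcases le_total s x₀ with h | h
    · simpa [min_eq_left h] using hs
    · simpa [min_eq_right h] using hx₀I
  have hMI : max s x₀ ∈ EI a b := by
    rcases le_total s x₀ with h | h
    · simpa [max_eq_right h] using hx₀I
    · simpa [max_eq_left h] using hs
  obtain ⟨c₁, hac₁, hc₁m⟩ := EReal.exists_between_coe_real hmI.1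
  obtain ⟨c₀, hac₀, hc₀c₁⟩ := EReal.exists_between_coe_real hac₁
  obtain ⟨d₁, hd₁M, hd₁b⟩ := EReal.exists_between_coe_real hMI.2
  obtain ⟨d₀, hd₀d₁, hd₀b⟩ := EReal.exists_between_coe_real hd₁b
  have hc₁m' : c₁ < min s x₀ := EReal.coe_lt_coe_iff.1 hc₁m
  have hc₀c₁' : c₀ < c₁ := EReal.coe_lt_coe_iff.1 hc₀c₁
  have hMd₁ : max s x₀ < d₁ := EReal.coe_lt_coe_iff.1 hd₁M
  have hd₁d₀ : d₁ < d₀ := EReal.coe_lt_coe_iff.1 hd₀d₁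
  have hc₁s : c₁ < s := hc₁m'.trans_le (min_le_left _ _)
  have hsd₁ : s < d₁ := (le_max_left s x₀).trans_lt hMd₁
  have hc₀I : c₀ ∈ EI a b :=
    ⟨hac₀, lt_trans (hc₀c₁.trans (hc₁m.trans_le (EReal.coe_le_coe_iff.2 (min_le_left _ _)))) hs.2⟩
  have hd₀I : d₀ ∈ EI a b :=
    ⟨lt_of_lt_of_le hs.1 ((EReal.coe_le_coe_iff.2 (le_max_left s x₀)).trans
      (le_of_lt (hd₁M.trans hd₀d₁))), hd₀b⟩
  have hc₀s : c₀ < s := hc₀c₁'.trans hc₁s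
  have hsd₀ : s < d₀ := hsd₁.trans hd₁d₀
  have hc₀d₀ : c₀ < d₀ := hc₀s.trans hsd₀
  have hc₀d₁ : c₀ < d₁ := hc₀s.trans hsd₁
  have hIcc : Icc c₀ d₀ ⊆ EI a b := hconv hc₀I hd₀I
  obtain ⟨νu', ν1, hνu', hν1, hequ'⟩ := hsol.2.2.1 c₀ hc₀I d₀ hd₀I hc₀d₀
  obtain ⟨νw', ν2, hνw', hν2, heqw'⟩ := hsol.2.2.2 c₀ hc₀I d₀ hd₀I hc₀d₀
  set C : Ctx (EI a b) r α β u w c₀ d₀ :=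
    { hcd := hc₀d₀, hIcc := hIcc, hr0 := hr.1, hr1 := hr.2,
      hbalu := hsol.1.2, hbalw := hsol.2.1.2,
      νu := νu', να := ν1 0, νw := νw', νβ := ν2 0,
      hνu := hνu', hνα := hν1 0, hνw := hνw', hνβ := hν2 0,
      hequ := fun E hE hEm => by simpa using hequ' E hE hEm,
      heqw := fun E hE hEm => by simpa using heqw' E hE hEm,
      Ru := BVRep.of_locallyBV hsol.1.1 hc₀d₀.le hIcc,
      Rw := BVRep.of_locallyBV hsol.2.1.1 hc₀d₀.le hIcc,
      Rα := BVRep.of_monotoneOn hα.monotoneOn hc₀d₀.le hIcc,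
      Rβ := BVRep.of_locallyBV hβ hc₀d₀.le hIcc,
      hθ1 := fun x hx => by simpa [theta] using (hθ x (hIcc (Ioo_subset_Icc_self hx))).1,
      hθ2 := fun x hx => by simpa [theta] using (hθ x (hIcc (Ioo_subset_Icc_self hx))).2 }
    with hCdef
  have hsIoc : {s} ⊆ Ioc c₀ d₀ := by
    intro z hz; rw [mem_singleton_iff] at hz; exact hz ▸ ⟨hc₀s, hsd₀.le⟩
  -- analysis of the jump relations at s
  have hJa0 : 0 ≤ jump α s := jump_nonneg hα.monotoneOn hIcc hc₀s hsd₀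
  have h1 : C.νu {s} = rightLim u s - leftLim u s := val_singleton C.hνu C.Ru hc₀s hsd₀.le
  have hJas : C.να {s} = jump α s := val_singleton C.hνα C.Rα hc₀s hsd₀.le
  have h2 : C.νu {s} = w s * jump α s := by
    rw [C.hequ {s} hsIoc (measurableSet_singleton s), sInt_singleton', hJas]
  have h3 : C.νw {s} = rightLim w s - leftLim w s := val_singleton C.hνw C.Rw hc₀s hsd₀.le
  have h4 : C.νw {s} = 0 := by
    rw [C.heqw {s} hsIoc (measurableSet_singleton s), sInt_singleton', hus, zero_mul]
  have hwlr : rightLim w s = leftLim w s := by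
    have := h3.symm.trans h4; linarith
  have hωl : leftLim w s = w s := by
    have hb := hsol.2.1.2 s (hIcc ⟨hc₀s.le, hsd₀.le⟩)
    rw [hwlr] at hb; linarith
  have hωr : rightLim w s = w s := hwlr.trans hωl
  have hbal0 : r * leftLim u s + (1 - r) * rightLim u s = 0 := by
    have := hsol.1.2 s (hIcc ⟨hc₀s.le, hsd₀.le⟩); rw [hus] at this; linarith
  have hAB : rightLim u s - leftLim u s = w s * jump α s := h1.symm.trans h2
  have hA : rightLim u s = r * (w s * jump α s) := by linear_combination hbal0 + r * hAB
  have hB : leftLim u s = -((1 - r) * (w s * jump α s)) := by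
    linear_combination hbal0 - (1 - r) * hAB
  rcases eq_or_ne (w s) 0 with hω | hω
  · -- w(s) = 0 : u and w vanish near s, propagate to x₀, contradiction
    exfalso
    have hA0 : rightLim u s = 0 := by rw [hA, hω]; ring
    have hB0 : leftLim u s = 0 := by rw [hB, hω]; ring
    have hwr0 : rightLim w s = 0 := hωr.trans hω
    have hwl0 : leftLim w s = 0 := hωl.trans hω
    have hx₀ne : x₀ ≠ s := fun h => hx₀ (h ▸ hus)
    rcases hx₀ne.lt_or_gt with hlt | hgt
    · have := C.prop_left hc₀c₁' hc₁s.le hsd₀.le hB0 hwl0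
      exact hx₀ (this x₀ ⟨(hc₁m'.trans_le (min_le_right s x₀)).le, hlt⟩).1
    · have := C.prop_right hc₀s hsd₁.le hd₁d₀ hA0 hwr0
      exact hx₀ (this x₀ ⟨hgt, ((le_max_right s x₀).trans_lt hMd₁).le⟩).1
  -- main case : w s ≠ 0
  have hzero := jneg_eq_zero hα.monotoneOn hIcc hc₀d₁ hd₁d₀ C.hνα
  have hwmemr : ∀ᶠ τ in 𝓝[>] s, w τ = r * leftLim w τ + (1 - r) * rightLim w τ := by
    filter_upwards [Ioo_mem_nhdsGT hsd₀] with τ hτ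
    exact hsol.2.1.2 τ (hIcc ⟨hc₀s.le.trans hτ.1.le, hτ.2.le⟩)
  have hwmeml : ∀ᶠ τ in 𝓝[<] s, w τ = r * leftLim w τ + (1 - r) * rightLim w τ := by
    filter_upwards [Ioo_mem_nhdsLT hc₀s] with τ hτ
    exact hsol.2.1.2 τ (hIcc ⟨hτ.1.le, hτ.2.le.trans hsd₀.le⟩)
  have hwr : Tendsto w (𝓝[>] s) (𝓝 (w s)) := by
    have h12 := ((C.Rw.tendsto_leftLim_right hc₀s.le hsd₀).const_mul r).add
      ((C.Rw.tendsto_rightLim_right hc₀s.le hsd₀).const_mul (1 - r))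
    have hcomb : r * rightLim w s + (1 - r) * rightLim w s = w s := by rw [hωr]; ring
    rw [hcomb] at h12
    exact h12.congr' (hwmemr.mono fun τ e => e.symm)
  have hwl : Tendsto w (𝓝[<] s) (𝓝 (w s)) := by
    have h12 := ((C.Rw.tendsto_leftLim_left hc₀s hsd₀.le).const_mul r).add
      ((C.Rw.tendsto_rightLim_left hc₀s hsd₀.le).const_mul (1 - r))
    have hcomb : r * leftLim w s + (1 - r) * leftLim w s = w s := by rw [hωl]; ring
    rw [hcomb] at h12
    exact h12.congr' (hwmeml.mono fun τ e => e.symm)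
  have hIocd₁Icc : Ioc c₀ d₁ ⊆ Icc c₀ d₀ := fun t ht => ⟨ht.1.le, ht.2.trans hd₁d₀.le⟩
  rcases hω.lt_or_gt with hneg | hpos
  · -- w s < 0 : u is positive on the left, negative on the right
    obtain ⟨e₁, he₁, hsub₁⟩ := mem_nhdsGT_iff_exists_Ioo_subset.1
      (hwr.eventually_lt_const (by linarith : w s < w s / 2))
    obtain ⟨e₂, he₂, hsub₂⟩ := mem_nhdsLT_iff_exists_Ioo_subset.1
      (hwl.eventually_lt_const (by linarith : w s < w s / 2))
    refine ⟨min (min (e₁ - s) (s - e₂)) (min (d₁ - s) (s - c₁)), by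
      simp only [lt_min_iff]
      exact ⟨⟨by simpa using he₁, by simpa using he₂⟩, by linarith, by linarith⟩, ?_, Or.inr ⟨?_, ?_⟩⟩
    · intro x hx
      have h5 : min (min (e₁ - s) (s - e₂)) (min (d₁ - s) (s - c₁)) ≤ s - c₁ :=
        (min_le_right _ _).trans (min_le_right _ _)
      have h6 : min (min (e₁ - s) (s - e₂)) (min (d₁ - s) (s - c₁)) ≤ d₁ - s :=
        (min_le_right _ _).trans (min_le_left _ _)
      exact hIcc ⟨by linarith [hx.1, hc₀c₁'], by linarith [hx.2, hd₁d₀]⟩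
    · -- left : 0 < leftLim u x
      intro x hx
      have h5 : min (min (e₁ - s) (s - e₂)) (min (d₁ - s) (s - c₁)) ≤ s - e₂ :=
        (min_le_left _ _).trans (min_le_right _ _)
      have h6 : min (min (e₁ - s) (s - e₂)) (min (d₁ - s) (s - c₁)) ≤ s - c₁ :=
        (min_le_right _ _).trans (min_le_right _ _)
      have hxc : c₁ < x := by have := hx.1; linarith
      have hxe₂ : e₂ < x := by have := hx.1; linarith
      have hxs : x < s := hx.2
      have hc₀x : c₀ < x := hc₀c₁'.trans hxc
      have hEsub : Ico x s ⊆ Ioc c₀ d₁ := fun t ht =>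
        ⟨hc₀x.trans_le ht.1, ht.2.le.trans hsd₁.le⟩
      have hico : C.νu (Ico x s) = leftLim u s - leftLim u x :=
        val_Ico C.hνu C.Ru hc₀x hxs.le hsd₀.le
      have heq2 : C.νu (Ico x s) = sInt C.να w (Ico x s) :=
        C.hequ _ (fun t ht => ⟨(hEsub ht).1, (hEsub ht).2.trans hd₁d₀.le⟩) measurableSet_Ico
      have hz : jneg C.να (Ico x s) = 0 := hzero _ hEsub measurableSet_Ico
      have hw2 : ∀ t ∈ Ico x s, w t ≤ w s / 2 := fun t ht =>
        (hsub₂ ⟨hxe₂.trans_le ht.1, ht.2⟩).le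
      have hle := sInt_le C.Rw measurableSet_Ico (fun t ht => hIocd₁Icc (hEsub ht)) hz hw2
      have hpos_eq : (jpos C.να (Ico x s)).toReal = leftLim α s - leftLim α x := by
        have hν := nu_eval C.να (measurableSet_Ico (a := x) (b := s))
        rw [hz] at hν
        simp only [ENNReal.toReal_zero, sub_zero] at hν
        rw [← hν]
        exact val_Ico C.hνα C.Rα hc₀x hxs.le hsd₀.le
      have hstrict : 0 < leftLim α s - leftLim α x := by
        have := leftLim_strict hα hIcc hc₀x hxs hsd₀.le; linarith
      have hBm : 0 ≤ leftLim u s := by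
        rw [hB]
        nlinarith [mul_nonneg (sub_nonneg.2 hr.2) (mul_nonneg (neg_nonneg.2 hneg.le) hJa0)]
      have hfin : C.νu (Ico x s) ≤ w s / 2 * (leftLim α s - leftLim α x) := by
        rw [heq2, ← hpos_eq]; exact hle
      have : leftLim u x = leftLim u s - C.νu (Ico x s) := by rw [hico]; ring
      rw [this]
      have hq : w s / 2 * (leftLim α s - leftLim α x) < 0 :=
        mul_neg_of_neg_of_pos (by linarith) hstrict
      linarith
    · -- right : rightLim u x < 0
      intro x hx
      have h5 : min (min (e₁ - s) (s - e₂)) (min (d₁ - s) (s - c₁)) ≤ e₁ - s :=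
        (min_le_left _ _).trans (min_le_left _ _)
      have h6 : min (min (e₁ - s) (s - e₂)) (min (d₁ - s) (s - c₁)) ≤ d₁ - s :=
        (min_le_right _ _).trans (min_le_left _ _)
      have hxe₁ : x < e₁ := by have := hx.2; linarith
      have hxd₁ : x < d₁ := by have := hx.2; linarith
      have hsx : s < x := hx.1
      have hxd₀ : x < d₀ := hxd₁.trans hd₁d₀
      have hEsub : Ioc s x ⊆ Ioc c₀ d₁ := fun t ht =>
        ⟨hc₀s.trans ht.1, ht.2.trans hxd₁.le⟩
      have hioc : C.νu (Ioc s x) = rightLim u x - rightLim u s :=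
        C.hνu s ⟨hc₀s.le, hsd₀.le⟩ x ⟨(hc₀s.trans hsx).le, hxd₀.le⟩ hsx.le
      have heq2 : C.νu (Ioc s x) = sInt C.να w (Ioc s x) :=
        C.hequ _ (fun t ht => ⟨(hEsub ht).1, (hEsub ht).2.trans hd₁d₀.le⟩) measurableSet_Ioc
      have hz : jneg C.να (Ioc s x) = 0 := hzero _ hEsub measurableSet_Ioc
      have hw2 : ∀ t ∈ Ioc s x, w t ≤ w s / 2 := fun t ht =>
        (hsub₁ ⟨ht.1, ht.2.trans_lt hxe₁⟩).le
      have hle := sInt_le C.Rw measurableSet_Ioc (fun t ht => hIocd₁Icc (hEsub ht)) hz hw2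
      have hpos_eq : (jpos C.να (Ioc s x)).toReal = rightLim α x - rightLim α s := by
        have hν := nu_eval C.να (measurableSet_Ioc (a := s) (b := x))
        rw [hz] at hν
        simp only [ENNReal.toReal_zero, sub_zero] at hν
        rw [← hν]
        exact C.hνα s ⟨hc₀s.le, hsd₀.le⟩ x ⟨(hc₀s.trans hsx).le, hxd₀.le⟩ hsx.le
      have hstrict : 0 < rightLim α x - rightLim α s := by
        have := rightLim_strict hα hIcc hc₀s.le hsx hxd₀; linarith
      have hAm : rightLim u s ≤ 0 := by
        rw [hA]
        nlinarith [mul_nonneg hr.1 (mul_nonneg (neg_nonneg.2 hneg.le) hJa0)]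
      have hfin : C.νu (Ioc s x) ≤ w s / 2 * (rightLim α x - rightLim α s) := by
        rw [heq2, ← hpos_eq]; exact hle
      have : rightLim u x = rightLim u s + C.νu (Ioc s x) := by rw [hioc]; ring
      rw [this]
      have hq : w s / 2 * (rightLim α x - rightLim α s) < 0 :=
        mul_neg_of_neg_of_pos (by linarith) hstrict
      linarith
  · -- w s > 0 : u is negative on the left, positive on the right
    obtain ⟨e₁, he₁, hsub₁⟩ := mem_nhdsGT_iff_exists_Ioo_subset.1
      (hwr.eventually_const_lt (by linarith : w s / 2 < w s))
    obtain ⟨e₂, he₂, hsub₂⟩ := mem_nhdsLT_iff_exists_Ioo_subset.1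
      (hwl.eventually_const_lt (by linarith : w s / 2 < w s))
    refine ⟨min (min (e₁ - s) (s - e₂)) (min (d₁ - s) (s - c₁)), by
      simp only [lt_min_iff]
      exact ⟨⟨by simpa using he₁, by simpa using he₂⟩, by linarith, by linarith⟩, ?_, Or.inl ⟨?_, ?_⟩⟩
    · intro x hx
      have h5 : min (min (e₁ - s) (s - e₂)) (min (d₁ - s) (s - c₁)) ≤ s - c₁ :=
        (min_le_right _ _).trans (min_le_right _ _)
      have h6 : min (min (e₁ - s) (s - e₂)) (min (d₁ - s) (s - c₁)) ≤ d₁ - s :=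
        (min_le_right _ _).trans (min_le_left _ _)
      exact hIcc ⟨by linarith [hx.1, hc₀c₁'], by linarith [hx.2, hd₁d₀]⟩
    · -- left : leftLim u x < 0
      intro x hx
      have h5 : min (min (e₁ - s) (s - e₂)) (min (d₁ - s) (s - c₁)) ≤ s - e₂ :=
        (min_le_left _ _).trans (min_le_right _ _)
      have h6 : min (min (e₁ - s) (s - e₂)) (min (d₁ - s) (s - c₁)) ≤ s - c₁ :=
        (min_le_right _ _).trans (min_le_right _ _)
      have hxc : c₁ < x := by have := hx.1; linarith
      have hxe₂ : e₂ < x := by have := hx.1; linarith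
      have hxs : x < s := hx.2
      have hc₀x : c₀ < x := hc₀c₁'.trans hxc
      have hEsub : Ico x s ⊆ Ioc c₀ d₁ := fun t ht =>
        ⟨hc₀x.trans_le ht.1, ht.2.le.trans hsd₁.le⟩
      have hico : C.νu (Ico x s) = leftLim u s - leftLim u x :=
        val_Ico C.hνu C.Ru hc₀x hxs.le hsd₀.le
      have heq2 : C.νu (Ico x s) = sInt C.να w (Ico x s) :=
        C.hequ _ (fun t ht => ⟨(hEsub ht).1, (hEsub ht).2.trans hd₁d₀.le⟩) measurableSet_Ico
      have hz : jneg C.να (Ico x s) = 0 := hzero _ hEsub measurableSet_Ico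
      have hw2 : ∀ t ∈ Ico x s, w s / 2 ≤ w t := fun t ht =>
        (hsub₂ ⟨hxe₂.trans_le ht.1, ht.2⟩).le
      have hge := sInt_ge C.Rw measurableSet_Ico (fun t ht => hIocd₁Icc (hEsub ht)) hz hw2
      have hpos_eq : (jpos C.να (Ico x s)).toReal = leftLim α s - leftLim α x := by
        have hν := nu_eval C.να (measurableSet_Ico (a := x) (b := s))
        rw [hz] at hν
        simp only [ENNReal.toReal_zero, sub_zero] at hν
        rw [← hν]
        exact val_Ico C.hνα C.Rα hc₀x hxs.le hsd₀.le
      have hstrict : 0 < leftLim α s - leftLim α x := by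
        have := leftLim_strict hα hIcc hc₀x hxs hsd₀.le; linarith
      have hBm : leftLim u s ≤ 0 := by
        rw [hB]
        nlinarith [mul_nonneg (sub_nonneg.2 hr.2) (mul_nonneg hpos.le hJa0)]
      have hfin : w s / 2 * (leftLim α s - leftLim α x) ≤ C.νu (Ico x s) := by
        rw [heq2, ← hpos_eq]; exact hge
      have : leftLim u x = leftLim u s - C.νu (Ico x s) := by rw [hico]; ring
      rw [this]
      have hq : 0 < w s / 2 * (leftLim α s - leftLim α x) :=
        mul_pos (by linarith) hstrict
      linarith
    · -- right : 0 < rightLim u x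
      intro x hx
      have h5 : min (min (e₁ - s) (s - e₂)) (min (d₁ - s) (s - c₁)) ≤ e₁ - s :=
        (min_le_left _ _).trans (min_le_left _ _)
      have h6 : min (min (e₁ - s) (s - e₂)) (min (d₁ - s) (s - c₁)) ≤ d₁ - s :=
        (min_le_right _ _).trans (min_le_left _ _)
      have hxe₁ : x < e₁ := by have := hx.2; linarith
      have hxd₁ : x < d₁ := by have := hx.2; linarith
      have hsx : s < x := hx.1
      have hxd₀ : x < d₀ := hxd₁.trans hd₁d₀
      have hEsub : Ioc s x ⊆ Ioc c₀ d₁ := fun t ht =>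
        ⟨hc₀s.trans ht.1, ht.2.trans hxd₁.le⟩
      have hioc : C.νu (Ioc s x) = rightLim u x - rightLim u s :=
        C.hνu s ⟨hc₀s.le, hsd₀.le⟩ x ⟨(hc₀s.trans hsx).le, hxd₀.le⟩ hsx.le
      have heq2 : C.νu (Ioc s x) = sInt C.να w (Ioc s x) :=
        C.hequ _ (fun t ht => ⟨(hEsub ht).1, (hEsub ht).2.trans hd₁d₀.le⟩) measurableSet_Ioc
      have hz : jneg C.να (Ioc s x) = 0 := hzero _ hEsub measurableSet_Ioc
      have hw2 : ∀ t ∈ Ioc s x, w s / 2 ≤ w t := fun t ht =>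
        (hsub₁ ⟨ht.1, ht.2.trans_lt hxe₁⟩).le
      have hge := sInt_ge C.Rw measurableSet_Ioc (fun t ht => hIocd₁Icc (hEsub ht)) hz hw2
      have hpos_eq : (jpos C.να (Ioc s x)).toReal = rightLim α x - rightLim α s := by
        have hν := nu_eval C.να (measurableSet_Ioc (a := s) (b := x))
        rw [hz] at hν
        simp only [ENNReal.toReal_zero, sub_zero] at hν
        rw [← hν]
        exact C.hνα s ⟨hc₀s.le, hsd₀.le⟩ x ⟨(hc₀s.trans hsx).le, hxd₀.le⟩ hsx.le
      have hstrict : 0 < rightLim α x - rightLim α s := by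
        have := rightLim_strict hα hIcc hc₀s.le hsx hxd₀; linarith
      have hAm : 0 ≤ rightLim u s := by
        rw [hA]
        nlinarith [mul_nonneg hr.1 (mul_nonneg hpos.le hJa0)]
      have hfin : w s / 2 * (rightLim α x - rightLim α s) ≤ C.νu (Ioc s x) := by
        rw [heq2, ← hpos_eq]; exact hge
      have : rightLim u x = rightLim u s + C.νu (Ioc s x) := by rw [hioc]; ring
      rw [this]
      have hq : 0 < w s / 2 * (rightLim α x - rightLim α s) :=
        mul_pos (by linarith) hstrict
      linarith
end
end
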